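/- arXiv:2509.09377 — 6 statements merged into one kernel-verified Lean document; each statement's English description precedes it below -/
import Mathlib

section
/- Let 1 ≤ p < ∞, let ρ be a bounded Borel measure on I = [0,1], and assume the p-th discrete absolute moment M_p(φ_σ) = sup_{x∈ℝ} ∑_{k∈ℤ} |x−k|^p φ_σ(x−k) is finite. Then there is a constant C > 0 (depending only on p, φ_σ(1), M_p(φ_σ), and ρ(I)) such that ‖S_n^ρ(|t − x|)(x)‖_{L^p(I,ρ)} ≤ C/n for all n ∈ ℕ, where S_n^ρ(|t − x|)(x) = ∑_{k=0}^n [ (∫_0^1 |t − x| φ_σ(nt−k) dρ(t)) / (∫_0^1 φ_σ(nt−k) dρ(t)) ] · φ_σ(nx−k) / ∑_{k=0}^n φ_σ(nx−k). -/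
open MeasureTheory Set Filter Topology

noncomputable section

/-- Kernel associated with a sigmoidal function: `φ_σ(x) = (σ(x+1) − σ(x−1))/2`. -/
def phiK (σ : ℝ → ℝ) (x : ℝ) : ℝ := (σ (x + 1) - σ (x - 1)) / 2

/-- `σ` is a (non-decreasing) sigmoidal function. -/
def Sigmoidal (σ : ℝ → ℝ) : Prop :=
  Monotone σ ∧ Tendsto σ atBot (nhds 0) ∧ Tendsto σ atTop (nhds 1)

/-- Strict positivity of a measure on `I = [0,1]`. -/
def StrictlyPositive (ρ : Measure ℝ) : Prop :=
  ∀ A : Set ℝ, IsOpen A → (A ∩ Icc (0:ℝ) 1).Nonempty → 0 < ρ (A ∩ Icc (0:ℝ) 1)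

/-- Standard kernel properties: nonnegativity, `φ_σ(1) > 0`, partition of unity, and
`∑_{k=0}^n φ_σ(nx−k) ≥ φ_σ(1)` on `[0,1]`. -/
def KernelStd (σ : ℝ → ℝ) : Prop :=
  (∀ x, 0 ≤ phiK σ x) ∧ 0 < phiK σ 1 ∧
    (∀ x : ℝ, ∑' k : ℤ, phiK σ (x - (k : ℝ)) = 1) ∧
    ∀ n : ℕ, ∀ x ∈ Icc (0:ℝ) 1,
      phiK σ 1 ≤ ∑ k ∈ Finset.range (n + 1), phiK σ ((n : ℝ) * x - (k : ℝ))

/-- `‖g‖_{L^p([0,1],ρ)} = (∫₀¹ |g|^p dρ)^{1/p}`. -/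
def LpNorm1 (ρ : Measure ℝ) (p : ℝ) (g : ℝ → ℝ) : ℝ :=
  (∫ x in Icc (0:ℝ) 1, |g x| ^ p ∂ρ) ^ (1 / p)

/-- Finiteness of the `p`-th discrete absolute moment
`M_p(φ_σ) = sup_{x∈ℝ} ∑_{k∈ℤ} |x−k|^p φ_σ(x−k)`. -/
def MomentFin (σ : ℝ → ℝ) (p : ℝ) : Prop :=
  (⨆ x : ℝ, ∑' k : ℤ, ENNReal.ofReal (|x - (k : ℝ)| ^ p * phiK σ (x - (k : ℝ)))) < ⊤

/-- The function `x ↦ S_n^ρ(|t − x|)(x)`. -/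
def nnAbsMoment (ρ : Measure ℝ) (σ : ℝ → ℝ) (n : ℕ) (x : ℝ) : ℝ :=
  (∑ k ∈ Finset.range (n + 1),
      ((∫ t in Icc (0:ℝ) 1, |t - x| * phiK σ ((n : ℝ) * t - (k : ℝ)) ∂ρ) /
          ∫ t in Icc (0:ℝ) 1, phiK σ ((n : ℝ) * t - (k : ℝ)) ∂ρ) *
        phiK σ ((n : ℝ) * x - (k : ℝ))) /
    ∑ k ∈ Finset.range (n + 1), phiK σ ((n : ℝ) * x - (k : ℝ))


/-- Weighted Hölder (Jensen) inequality for lintegrals. -/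
lemma aux_lintegral_weight_holder {α : Type*} [MeasurableSpace α] {μ : Measure α}
    {W F : α → ENNReal} {p : ℝ} (hp : 1 ≤ p)
    (hW : AEMeasurable W μ) (hF : AEMeasurable F μ) (hWt : ∀ t, W t ≠ ⊤) :
    ∫⁻ t, W t * F t ∂μ ≤
      (∫⁻ t, W t ∂μ) ^ (1 - 1/p) * (∫⁻ t, W t * (F t) ^ p ∂μ) ^ (1/p) := by
  rcases eq_or_lt_of_le hp with h1 | h1
  · simp [← h1]
  have hp0 : p ≠ 0 := by positivity
  have hpq : p.HolderConjugate (Real.conjExponent p) := Real.HolderConjugate.conjExponent h1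
  set q := Real.conjExponent p with hqdef
  have hq0 : q ≠ 0 := hpq.symm.ne_zero
  have hqe : 1 - 1/p = 1/q := by
    rw [one_div, one_div, hpq.one_sub_inv]
  have key : ∀ t, W t * F t = (W t ^ (1/p) * F t) * (W t ^ (1/q)) := by
    intro t
    rcases eq_or_ne (W t) 0 with h0 | h0
    · rw [h0, ENNReal.zero_rpow_of_pos (by rw [one_div]; exact inv_pos.mpr (by linarith)), ENNReal.zero_rpow_of_pos (by rw [one_div]; exact inv_pos.mpr hpq.symm.pos)]
      simp
    · rw [mul_right_comm, ← ENNReal.rpow_add _ _ h0 (hWt t)]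
      rw [one_div, one_div, hpq.inv_add_inv_eq_one, ENNReal.rpow_one]
  calc ∫⁻ t, W t * F t ∂μ
      = ∫⁻ t, (W t ^ (1/p) * F t) * (W t ^ (1/q)) ∂μ := by
        exact lintegral_congr fun t => key t
    _ ≤ (∫⁻ t, (W t ^ (1/p) * F t) ^ p ∂μ) ^ (1/p) *
          (∫⁻ t, (W t ^ (1/q)) ^ q ∂μ) ^ (1/q) := by
        exact ENNReal.lintegral_mul_le_Lp_mul_Lq μ hpq
          (f := fun t => W t ^ (1/p) * F t) (g := fun t => W t ^ (1/q))
          ((hW.pow_const (1/p)).mul hF) (hW.pow_const (1/q))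
    _ = (∫⁻ t, W t ∂μ) ^ (1 - 1/p) * (∫⁻ t, W t * (F t) ^ p ∂μ) ^ (1/p) := by
        have e1 : ∀ t, (W t ^ (1/p) * F t) ^ p = W t * F t ^ p := by
          intro t
          rw [ENNReal.mul_rpow_of_nonneg _ _ (by positivity : (0:ℝ) ≤ p),
            ← ENNReal.rpow_mul, one_div, inv_mul_cancel₀ hp0, ENNReal.rpow_one]
        have e2 : ∀ t, (W t ^ (1/q)) ^ q = W t := by
          intro t
          rw [← ENNReal.rpow_mul, one_div, inv_mul_cancel₀ hq0, ENNReal.rpow_one]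
        simp_rw [e1, e2, hqe]
        rw [mul_comm]

/-- Weighted Hölder (Jensen) inequality for real integrals. -/
lemma aux_integral_weight_holder {μ : Measure ℝ} {w f : ℝ → ℝ} {p : ℝ} (hp : 1 ≤ p)
    (hw : 0 ≤ᵐ[μ] w) (hf : 0 ≤ᵐ[μ] f) (hfm : AEMeasurable f μ)
    (hfw : Integrable (fun t => f t * w t) μ) (hwi : Integrable w μ)
    (hfpw : Integrable (fun t => f t ^ p * w t) μ) :
    (∫ t, f t * w t ∂μ) ^ p ≤ (∫ t, w t ∂μ) ^ (p - 1) * ∫ t, f t ^ p * w t ∂μ := by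
  have hp0 : (0:ℝ) < p := lt_of_lt_of_le one_pos hp
  have hpne : p ≠ 0 := ne_of_gt hp0
  set W : ℝ → ENNReal := fun t => ENNReal.ofReal (w t) with hWdef
  set F : ℝ → ENNReal := fun t => ENNReal.ofReal (f t) with hFdef
  have hWm : AEMeasurable W μ := ENNReal.measurable_ofReal.comp_aemeasurable hwi.aemeasurable
  have hFm : AEMeasurable F μ := ENNReal.measurable_ofReal.comp_aemeasurable hfm
  have h1 : ENNReal.ofReal (∫ t, f t * w t ∂μ) = ∫⁻ t, W t * F t ∂μ := by
    rw [MeasureTheory.ofReal_integral_eq_lintegral_ofReal hfw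
      (by filter_upwards [hw, hf] with t h1 h2; exact mul_nonneg h2 h1)]
    refine lintegral_congr_ae ?_
    filter_upwards [hw, hf] with t h1 h2
    rw [ENNReal.ofReal_mul h2, mul_comm]
  have h2 : ENNReal.ofReal (∫ t, w t ∂μ) = ∫⁻ t, W t ∂μ :=
    MeasureTheory.ofReal_integral_eq_lintegral_ofReal hwi hw
  have h3 : ENNReal.ofReal (∫ t, f t ^ p * w t ∂μ) = ∫⁻ t, W t * (F t) ^ p ∂μ := by
    rw [MeasureTheory.ofReal_integral_eq_lintegral_ofReal hfpw
      (by filter_upwards [hw, hf] with t h1 h2; exact mul_nonneg (Real.rpow_nonneg h2 p) h1)]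
    refine lintegral_congr_ae ?_
    filter_upwards [hw, hf] with t h1 h2
    rw [ENNReal.ofReal_mul (Real.rpow_nonneg h2 p), ← ENNReal.ofReal_rpow_of_nonneg h2 hp0.le,
      mul_comm]
  have key := aux_lintegral_weight_holder hp hWm hFm (fun t => ENNReal.ofReal_ne_top)
  rw [← h1, ← h2, ← h3] at key
  have hIw : 0 ≤ ∫ t, w t ∂μ := integral_nonneg_of_ae hw
  have hIfpw : 0 ≤ ∫ t, f t ^ p * w t ∂μ := integral_nonneg_of_ae
    (by filter_upwards [hw, hf] with t h1 h2; exact mul_nonneg (Real.rpow_nonneg h2 p) h1)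
  have hexp1 : (0:ℝ) ≤ 1 - 1/p := by
    rw [sub_nonneg]; exact (div_le_one hp0).mpr hp
  have key2 : ∫ t, f t * w t ∂μ ≤
      (∫ t, w t ∂μ) ^ (1 - 1/p) * (∫ t, f t ^ p * w t ∂μ) ^ (1/p) := by
    rw [ENNReal.ofReal_rpow_of_nonneg hIw hexp1, ENNReal.ofReal_rpow_of_nonneg hIfpw
      (by positivity), ← ENNReal.ofReal_mul (by positivity)] at key
    exact (ENNReal.ofReal_le_ofReal_iff (by positivity)).mp key
  have hIfw : 0 ≤ ∫ t, f t * w t ∂μ := integral_nonneg_of_ae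
    (by filter_upwards [hw, hf] with t h1 h2; exact mul_nonneg h2 h1)
  calc (∫ t, f t * w t ∂μ) ^ p
      ≤ ((∫ t, w t ∂μ) ^ (1 - 1/p) * (∫ t, f t ^ p * w t ∂μ) ^ (1/p)) ^ p :=
        Real.rpow_le_rpow hIfw key2 hp0.le
    _ = (∫ t, w t ∂μ) ^ (p - 1) * ∫ t, f t ^ p * w t ∂μ := by
        rw [Real.mul_rpow (by positivity) (by positivity), ← Real.rpow_mul hIw,
          ← Real.rpow_mul hIfpw]
        have e1 : (1 - 1/p) * p = p - 1 := by field_simp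
        have e2 : (1/p) * p = 1 := by field_simp
        rw [e1, e2, Real.rpow_one]

lemma aux_integrable_bdd {μ : Measure ℝ} [IsFiniteMeasure μ] {g : ℝ → ℝ} {C : ℝ}
    (hg : AEMeasurable g μ) (h : ∀ᵐ t ∂μ, |g t| ≤ C) : Integrable g μ :=
  Integrable.mono' (integrable_const C) hg.aestronglyMeasurable
    (by simpa [Real.norm_eq_abs] using h)

lemma aux_add_rpow_le {u v p : ℝ} (hu : 0 ≤ u) (hv : 0 ≤ v) (hp : 0 ≤ p) :
    (u + v) ^ p ≤ 2 ^ p * (u ^ p + v ^ p) := by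
  have h2 : (0:ℝ) ≤ 2 ^ p := Real.rpow_nonneg (by norm_num) p
  rcases le_total u v with h | h
  · calc (u + v) ^ p ≤ (2 * v) ^ p :=
          Real.rpow_le_rpow (by linarith) (by linarith) hp
      _ = 2 ^ p * v ^ p := Real.mul_rpow (by norm_num) hv
      _ ≤ 2 ^ p * (u ^ p + v ^ p) := by
          have : (0:ℝ) ≤ u ^ p := Real.rpow_nonneg hu p
          nlinarith [Real.rpow_nonneg hv p]
  · calc (u + v) ^ p ≤ (2 * u) ^ p :=
          Real.rpow_le_rpow (by linarith) (by linarith) hp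
      _ = 2 ^ p * u ^ p := Real.mul_rpow (by norm_num) hu
      _ ≤ 2 ^ p * (u ^ p + v ^ p) := by
          have : (0:ℝ) ≤ v ^ p := Real.rpow_nonneg hv p
          nlinarith [Real.rpow_nonneg hu p]

lemma aux_moment_sum {σ : ℝ → ℝ} {p : ℝ} (hφ0 : ∀ x, 0 ≤ phiK σ x) (hp : 0 ≤ p)
    (hfin : (⨆ x : ℝ, ∑' k : ℤ, ENNReal.ofReal (|x - (k : ℝ)| ^ p * phiK σ (x - (k : ℝ)))) ≠ ⊤)
    (m : ℕ) (y : ℝ) :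
    ∑ k ∈ Finset.range m, |y - (k:ℝ)| ^ p * phiK σ (y - (k:ℝ)) ≤
      (⨆ x : ℝ, ∑' k : ℤ, ENNReal.ofReal (|x - (k : ℝ)| ^ p * phiK σ (x - (k : ℝ)))).toReal := by
  rw [← ENNReal.ofReal_le_iff_le_toReal hfin]
  have hnn : ∀ k : ℕ, k ∈ Finset.range m →
      0 ≤ |y - (k:ℝ)| ^ p * phiK σ (y - (k:ℝ)) :=
    fun k _ => mul_nonneg (Real.rpow_nonneg (abs_nonneg _) p) (hφ0 _)
  rw [ENNReal.ofReal_sum_of_nonneg hnn]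
  have e : ∀ k : ℕ, ENNReal.ofReal (|y - (k:ℝ)| ^ p * phiK σ (y - (k:ℝ))) =
      (fun j : ℤ => ENNReal.ofReal (|y - (j:ℝ)| ^ p * phiK σ (y - (j:ℝ)))) ((k:ℤ)) := by
    intro k; push_cast; rfl
  calc ∑ k ∈ Finset.range m, ENNReal.ofReal (|y - (k:ℝ)| ^ p * phiK σ (y - (k:ℝ)))
      = ∑ j ∈ (Finset.range m).map ⟨fun k : ℕ => (k:ℤ), fun a b h => by simpa using h⟩,
          ENNReal.ofReal (|y - (j:ℝ)| ^ p * phiK σ (y - (j:ℝ))) := by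
        rw [Finset.sum_map]
        exact Finset.sum_congr rfl fun k _ => e k
    _ ≤ ∑' j : ℤ, ENNReal.ofReal (|y - (j:ℝ)| ^ p * phiK σ (y - (j:ℝ))) :=
        ENNReal.sum_le_tsum _
    _ ≤ ⨆ x : ℝ, ∑' k : ℤ, ENNReal.ofReal (|x - (k : ℝ)| ^ p * phiK σ (x - (k : ℝ))) :=
        le_iSup (fun x : ℝ => ∑' k : ℤ, ENNReal.ofReal (|x - (k : ℝ)| ^ p * phiK σ (x - (k : ℝ)))) y

/-- if `M_p(φ_σ) < ∞` then `‖S_n^ρ(|t − x|)(x)‖_{L^p(I,ρ)} ≤ C/n`. -/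
theorem statement5 (σ : ℝ → ℝ) (hσ : Sigmoidal σ) (hker : KernelStd σ)
    (ρ : Measure ℝ) [IsFiniteMeasure ρ]
    (p : ℝ) (hp : 1 ≤ p) (hM : MomentFin σ p) :
    ∃ C > (0:ℝ), ∀ n : ℕ, 0 < n →
      LpNorm1 ρ p (nnAbsMoment ρ σ n) ≤ C / n := by
  obtain ⟨hmono, hbot, htop⟩ := hσ
  obtain ⟨hφ0, hφ1, hsum1, hlow⟩ := hker
  have hp0 : (0:ℝ) < p := lt_of_lt_of_le one_pos hp
  have hpne : p ≠ 0 := ne_of_gt hp0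
  -- bounds on σ and phiK
  have hσ0 : ∀ x, 0 ≤ σ x := fun x =>
    le_of_tendsto hbot (eventually_atBot.2 ⟨x, fun y hy => hmono hy⟩)
  have hσ1 : ∀ x, σ x ≤ 1 := fun x =>
    ge_of_tendsto htop (eventually_atTop.2 ⟨x, fun y hy => hmono hy⟩)
  have hφle : ∀ x, phiK σ x ≤ 1 := by
    intro x; unfold phiK; nlinarith [hσ0 (x - 1), hσ1 (x + 1)]
  have hmσ : Measurable σ := hmono.measurable
  have hmφ : Measurable (phiK σ) := by
    unfold phiK; fun_prop
  -- moment constant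
  have hMne : (⨆ x : ℝ, ∑' k : ℤ,
      ENNReal.ofReal (|x - (k : ℝ)| ^ p * phiK σ (x - (k : ℝ)))) ≠ ⊤ := hM.ne
  set M : ℝ := (⨆ x : ℝ, ∑' k : ℤ,
      ENNReal.ofReal (|x - (k : ℝ)| ^ p * phiK σ (x - (k : ℝ)))).toReal with hMdef
  have hM0 : 0 ≤ M := ENNReal.toReal_nonneg
  have hmoment : ∀ (m : ℕ) (y : ℝ),
      ∑ k ∈ Finset.range m, |y - (k:ℝ)| ^ p * phiK σ (y - (k:ℝ)) ≤ M :=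
    fun m y => aux_moment_sum hφ0 hp0.le hMne m y
  have hsingle : ∀ u : ℝ, |u| ^ p * phiK σ u ≤ M := by
    intro u
    have := hmoment 1 u
    simpa using this
  set R : ℝ := (ρ (Icc (0:ℝ) 1)).toReal with hRdef
  have hR0 : 0 ≤ R := ENNReal.toReal_nonneg
  set K : ℝ := 2 ^ (p+1) * (M+1) * (R+1) / phiK σ 1 with hKdef
  have hKpos : 0 < K := by
    have h2 : (0:ℝ) < 2 ^ (p+1) := Real.rpow_pos_of_pos (by norm_num) _
    have := hφ1
    positivity
  refine ⟨K ^ (1/p), Real.rpow_pos_of_pos hKpos _, ?_⟩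
  intro n hn
  have hnpos : (0:ℝ) < n := by exact_mod_cast hn
  have hnp : (0:ℝ) < (n:ℝ) ^ p := Real.rpow_pos_of_pos hnpos p
  set c0 : ℝ := 2 ^ p / (n:ℝ) ^ p with hc0def
  have hc00 : 0 ≤ c0 := by positivity
  have hmem : ∀ᵐ t ∂(ρ.restrict (Icc (0:ℝ) 1)), t ∈ Icc (0:ℝ) 1 :=
    ae_restrict_mem measurableSet_Icc
  -- measurability and integrability
  have hψm : ∀ k : ℕ, Measurable (fun t : ℝ => phiK σ ((n:ℝ)*t - (k:ℝ))) := by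
    intro k; exact hmφ.comp (by fun_prop)
  have hψint : ∀ k : ℕ,
      Integrable (fun t : ℝ => phiK σ ((n:ℝ)*t - (k:ℝ))) (ρ.restrict (Icc (0:ℝ) 1)) := by
    intro k
    exact aux_integrable_bdd (hψm k).aemeasurable
      (ae_of_all _ fun t => by rw [abs_of_nonneg (hφ0 _)]; exact hφle _)
  have habs_bd : ∀ x ∈ Icc (0:ℝ) 1, ∀ t ∈ Icc (0:ℝ) 1, |t - x| ≤ 1 + |x| := by
    intro x hx t ht
    have h1 : |t| ≤ 1 := by
      rw [abs_le]; exact ⟨by linarith [ht.1], ht.2⟩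
    calc |t - x| ≤ |t| + |x| := abs_sub t x
      _ ≤ 1 + |x| := by linarith
  have hfwint : ∀ x : ℝ, ∀ k : ℕ,
      Integrable (fun t : ℝ => |t - x| * phiK σ ((n:ℝ)*t - (k:ℝ)))
        (ρ.restrict (Icc (0:ℝ) 1)) := by
    intro x k
    refine aux_integrable_bdd (C := 1 + |x|) (((measurable_id.sub_const x).abs.mul (hψm k)).aemeasurable) ?_
    filter_upwards [hmem] with t ht
    rw [abs_of_nonneg (mul_nonneg (abs_nonneg _) (hφ0 _))]
    have h1 : |t - x| ≤ 1 + |x| := by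
      have h2 : |t| ≤ 1 := by rw [abs_le]; exact ⟨by linarith [ht.1], ht.2⟩
      calc |t - x| ≤ |t| + |x| := abs_sub t x
        _ ≤ 1 + |x| := by linarith
    calc |t - x| * phiK σ ((n:ℝ)*t - (k:ℝ)) ≤ (1 + |x|) * 1 :=
        mul_le_mul h1 (hφle _) (hφ0 _) (by positivity)
      _ = 1 + |x| := mul_one _
  have hfpwint : ∀ x : ℝ, ∀ k : ℕ,
      Integrable (fun t : ℝ => |t - x| ^ p * phiK σ ((n:ℝ)*t - (k:ℝ)))
        (ρ.restrict (Icc (0:ℝ) 1)) := by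
    intro x k
    refine aux_integrable_bdd (C := (1 + |x|) ^ p)
      ((((measurable_id.sub_const x).abs.pow_const p).aemeasurable.mul (hψm k).aemeasurable)) ?_
    filter_upwards [hmem] with t ht
    rw [abs_of_nonneg (mul_nonneg (Real.rpow_nonneg (abs_nonneg _) p) (hφ0 _))]
    have h1 : |t - x| ≤ 1 + |x| := by
      have h2 : |t| ≤ 1 := by rw [abs_le]; exact ⟨by linarith [ht.1], ht.2⟩
      calc |t - x| ≤ |t| + |x| := abs_sub t x
        _ ≤ 1 + |x| := by linarith
    calc |t - x| ^ p * phiK σ ((n:ℝ)*t - (k:ℝ)) ≤ (1 + |x|) ^ p * 1 :=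
        mul_le_mul (Real.rpow_le_rpow (abs_nonneg _) h1 hp0.le) (hφle _) (hφ0 _)
          (Real.rpow_nonneg (by positivity) p)
      _ = (1 + |x|) ^ p := mul_one _
  have hAint : ∀ k : ℕ,
      Integrable (fun t : ℝ => |(n:ℝ)*t - (k:ℝ)| ^ p * phiK σ ((n:ℝ)*t - (k:ℝ)))
        (ρ.restrict (Icc (0:ℝ) 1)) := by
    intro k
    refine aux_integrable_bdd (C := M)
      (((((measurable_const_mul _).sub_const _).abs.pow_const p).aemeasurable.mul
        (hψm k).aemeasurable)) ?_
    refine ae_of_all _ fun t => ?_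
    rw [abs_of_nonneg (mul_nonneg (Real.rpow_nonneg (abs_nonneg _) p) (hφ0 _))]
    exact hsingle _
  -- nonnegativity of the basic integrals
  have hD0 : ∀ k : ℕ, 0 ≤ ∫ t in Icc (0:ℝ) 1, phiK σ ((n:ℝ)*t - (k:ℝ)) ∂ρ :=
    fun k => integral_nonneg fun t => hφ0 _
  have hN0 : ∀ x : ℝ, ∀ k : ℕ,
      0 ≤ ∫ t in Icc (0:ℝ) 1, |t - x| * phiK σ ((n:ℝ)*t - (k:ℝ)) ∂ρ :=
    fun x k => integral_nonneg fun t => mul_nonneg (abs_nonneg _) (hφ0 _)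
  have hA0 : ∀ k : ℕ,
      0 ≤ ∫ t in Icc (0:ℝ) 1, |(n:ℝ)*t - (k:ℝ)| ^ p * phiK σ ((n:ℝ)*t - (k:ℝ)) ∂ρ :=
    fun k => integral_nonneg fun t => mul_nonneg (Real.rpow_nonneg (abs_nonneg _) p) (hφ0 _)
  -- the sum of the A_k is bounded by M * R
  have hAsum : ∑ k ∈ Finset.range (n+1),
      (∫ t in Icc (0:ℝ) 1, |(n:ℝ)*t - (k:ℝ)| ^ p * phiK σ ((n:ℝ)*t - (k:ℝ)) ∂ρ) ≤ M * R := by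
    rw [← integral_finset_sum _ (fun k _ => hAint k)]
    calc (∫ t in Icc (0:ℝ) 1, ∑ k ∈ Finset.range (n+1),
            |(n:ℝ)*t - (k:ℝ)| ^ p * phiK σ ((n:ℝ)*t - (k:ℝ)) ∂ρ)
        ≤ ∫ _t in Icc (0:ℝ) 1, M ∂ρ := by
          refine integral_mono (integrable_finset_sum _ (fun k _ => hAint k))
            (integrable_const M) (fun t => ?_)
          exact hmoment (n+1) ((n:ℝ)*t)
      _ = M * R := by
          rw [setIntegral_const, smul_eq_mul, hRdef, mul_comm]
          rfl
  -- the comparison function g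
  set g : ℝ → ℝ := fun x => (∑ k ∈ Finset.range (n+1), phiK σ ((n:ℝ)*x - (k:ℝ)) *
      (c0 * ((∫ t in Icc (0:ℝ) 1, |(n:ℝ)*t - (k:ℝ)| ^ p * phiK σ ((n:ℝ)*t - (k:ℝ)) ∂ρ) /
          (∫ t in Icc (0:ℝ) 1, phiK σ ((n:ℝ)*t - (k:ℝ)) ∂ρ) + |(n:ℝ)*x - (k:ℝ)| ^ p))) /
      phiK σ 1 with hgdef
  -- pointwise estimate
  have h_point : ∀ x ∈ Icc (0:ℝ) 1, |nnAbsMoment ρ σ n x| ^ p ≤ g x := by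
    intro x hx
    unfold nnAbsMoment
    set W : ℝ := ∑ k ∈ Finset.range (n+1), phiK σ ((n:ℝ)*x - (k:ℝ)) with hWdef
    have hWlb : phiK σ 1 ≤ W := hlow n x hx
    have hWpos : 0 < W := lt_of_lt_of_le hφ1 hWlb
    -- the per-k estimate
    have hak : ∀ k ∈ Finset.range (n+1),
        phiK σ ((n:ℝ)*x - (k:ℝ)) *
          ((∫ t in Icc (0:ℝ) 1, |t - x| * phiK σ ((n:ℝ)*t - (k:ℝ)) ∂ρ) /
            (∫ t in Icc (0:ℝ) 1, phiK σ ((n:ℝ)*t - (k:ℝ)) ∂ρ)) ^ p ≤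
        phiK σ ((n:ℝ)*x - (k:ℝ)) *
          (c0 * ((∫ t in Icc (0:ℝ) 1, |(n:ℝ)*t - (k:ℝ)| ^ p * phiK σ ((n:ℝ)*t - (k:ℝ)) ∂ρ) /
            (∫ t in Icc (0:ℝ) 1, phiK σ ((n:ℝ)*t - (k:ℝ)) ∂ρ) + |(n:ℝ)*x - (k:ℝ)| ^ p)) := by
      intro k _
      refine mul_le_mul_of_nonneg_left ?_ (hφ0 _)
      set D : ℝ := ∫ t in Icc (0:ℝ) 1, phiK σ ((n:ℝ)*t - (k:ℝ)) ∂ρ with hDdef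
      set N : ℝ := ∫ t in Icc (0:ℝ) 1, |t - x| * phiK σ ((n:ℝ)*t - (k:ℝ)) ∂ρ with hNdef
      set A : ℝ := ∫ t in Icc (0:ℝ) 1, |(n:ℝ)*t - (k:ℝ)| ^ p * phiK σ ((n:ℝ)*t - (k:ℝ)) ∂ρ
        with hAdef
      set v : ℝ := |(n:ℝ)*x - (k:ℝ)| ^ p with hvdef
      have hv0 : 0 ≤ v := Real.rpow_nonneg (abs_nonneg _) p
      rcases eq_or_lt_of_le (hD0 k) with hD | hD
      · rw [← hDdef] at hD
        rw [← hD, div_zero, div_zero, Real.zero_rpow hpne]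
        exact mul_nonneg hc00 (by rw [zero_add]; exact hv0)
      · -- Hölder step
        have hhold := aux_integral_weight_holder (μ := ρ.restrict (Icc (0:ℝ) 1))
          (w := fun t => phiK σ ((n:ℝ)*t - (k:ℝ))) (f := fun t => |t - x|) hp
          (ae_of_all _ fun t => hφ0 _) (ae_of_all _ fun t => abs_nonneg _)
          ((measurable_id.sub_const x).abs.aemeasurable)
          (hfwint x k) (hψint k) (hfpwint x k)
        -- triangle inequality bound on the inner integral
        have hIb : (∫ t in Icc (0:ℝ) 1, |t - x| ^ p * phiK σ ((n:ℝ)*t - (k:ℝ)) ∂ρ) ≤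
            c0 * A + (c0 * v) * D := by
          have hptw : ∀ t : ℝ, |t - x| ^ p * phiK σ ((n:ℝ)*t - (k:ℝ)) ≤
              c0 * (|(n:ℝ)*t - (k:ℝ)| ^ p * phiK σ ((n:ℝ)*t - (k:ℝ))) +
              (c0 * v) * phiK σ ((n:ℝ)*t - (k:ℝ)) := by
            intro t
            have h1 : |t - x| ≤ (|(n:ℝ)*t - (k:ℝ)| + |(n:ℝ)*x - (k:ℝ)|) / n := by
              rw [le_div_iff₀ hnpos]
              have e : (n:ℝ)*t - (k:ℝ) - ((n:ℝ)*x - (k:ℝ)) = (t - x) * (n:ℝ) := by ring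
              calc |t - x| * (n:ℝ) = |(t - x) * (n:ℝ)| := by
                    rw [abs_mul, abs_of_pos hnpos]
                _ = |(n:ℝ)*t - (k:ℝ) - ((n:ℝ)*x - (k:ℝ))| := by rw [e]
                _ ≤ |(n:ℝ)*t - (k:ℝ)| + |(n:ℝ)*x - (k:ℝ)| := abs_sub _ _
            have h2 : |t - x| ^ p ≤
                c0 * (|(n:ℝ)*t - (k:ℝ)| ^ p + |(n:ℝ)*x - (k:ℝ)| ^ p) := by
              calc |t - x| ^ p ≤ ((|(n:ℝ)*t - (k:ℝ)| + |(n:ℝ)*x - (k:ℝ)|) / n) ^ p :=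
                    Real.rpow_le_rpow (abs_nonneg _) h1 hp0.le
                _ = (|(n:ℝ)*t - (k:ℝ)| + |(n:ℝ)*x - (k:ℝ)|) ^ p / (n:ℝ) ^ p :=
                    Real.div_rpow (by positivity) hnpos.le p
                _ ≤ 2 ^ p * (|(n:ℝ)*t - (k:ℝ)| ^ p + |(n:ℝ)*x - (k:ℝ)| ^ p) / (n:ℝ) ^ p := by
                    gcongr
                    exact aux_add_rpow_le (abs_nonneg _) (abs_nonneg _) hp0.le
                _ = c0 * (|(n:ℝ)*t - (k:ℝ)| ^ p + |(n:ℝ)*x - (k:ℝ)| ^ p) := by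
                    rw [hc0def]; ring
            calc |t - x| ^ p * phiK σ ((n:ℝ)*t - (k:ℝ))
                ≤ (c0 * (|(n:ℝ)*t - (k:ℝ)| ^ p + |(n:ℝ)*x - (k:ℝ)| ^ p)) *
                    phiK σ ((n:ℝ)*t - (k:ℝ)) :=
                  mul_le_mul_of_nonneg_right h2 (hφ0 _)
              _ = c0 * (|(n:ℝ)*t - (k:ℝ)| ^ p * phiK σ ((n:ℝ)*t - (k:ℝ))) +
                    (c0 * v) * phiK σ ((n:ℝ)*t - (k:ℝ)) := by
                  rw [hvdef]; ring
          calc (∫ t in Icc (0:ℝ) 1, |t - x| ^ p * phiK σ ((n:ℝ)*t - (k:ℝ)) ∂ρ)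
              ≤ ∫ t in Icc (0:ℝ) 1, (c0 * (|(n:ℝ)*t - (k:ℝ)| ^ p * phiK σ ((n:ℝ)*t - (k:ℝ))) +
                  (c0 * v) * phiK σ ((n:ℝ)*t - (k:ℝ))) ∂ρ := by
                refine integral_mono (hfpwint x k) ?_ (fun t => hptw t)
                exact ((hAint k).const_mul c0).add ((hψint k).const_mul (c0 * v))
            _ = c0 * A + (c0 * v) * D := by
                rw [integral_add ((hAint k).const_mul c0) ((hψint k).const_mul (c0 * v)),
                  integral_const_mul, integral_const_mul, ← hAdef, ← hDdef]
        have hDppos : 0 < D ^ p := Real.rpow_pos_of_pos hD p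
        have hDp1 : (0:ℝ) ≤ D ^ (p - 1) := Real.rpow_nonneg hD.le _
        calc (N / D) ^ p = N ^ p / D ^ p := Real.div_rpow (hN0 x k) hD.le p
          _ ≤ (D ^ (p-1) * (c0 * A + (c0 * v) * D)) / D ^ p := by
              gcongr
              exact hhold.trans (mul_le_mul_of_nonneg_left hIb hDp1)
          _ = c0 * (A / D + v) := by
              rw [Real.rpow_sub hD, Real.rpow_one, div_mul_eq_mul_div, div_div, mul_comm D (D ^ p),
                ← div_div, mul_div_cancel_left₀ _ hDppos.ne', add_div, mul_div_assoc,
                mul_div_cancel_right₀ _ hD.ne']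
              ring
    -- discrete Jensen step
    have hT : (∑ k ∈ Finset.range (n+1),
        ((∫ t in Icc (0:ℝ) 1, |t - x| * phiK σ ((n:ℝ)*t - (k:ℝ)) ∂ρ) /
          (∫ t in Icc (0:ℝ) 1, phiK σ ((n:ℝ)*t - (k:ℝ)) ∂ρ)) * phiK σ ((n:ℝ)*x - (k:ℝ))) ≤
        W ^ (1 - p⁻¹) * (∑ k ∈ Finset.range (n+1), phiK σ ((n:ℝ)*x - (k:ℝ)) *
          (((∫ t in Icc (0:ℝ) 1, |t - x| * phiK σ ((n:ℝ)*t - (k:ℝ)) ∂ρ) /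
            (∫ t in Icc (0:ℝ) 1, phiK σ ((n:ℝ)*t - (k:ℝ)) ∂ρ)) ^ p)) ^ p⁻¹ := by
      have := Real.inner_le_weight_mul_Lp_of_nonneg (Finset.range (n+1)) hp
        (fun k => phiK σ ((n:ℝ)*x - (k:ℝ)))
        (fun k => (∫ t in Icc (0:ℝ) 1, |t - x| * phiK σ ((n:ℝ)*t - (k:ℝ)) ∂ρ) /
          (∫ t in Icc (0:ℝ) 1, phiK σ ((n:ℝ)*t - (k:ℝ)) ∂ρ))
        (fun k => hφ0 _) (fun k => div_nonneg (hN0 x k) (hD0 k))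
      calc (∑ k ∈ Finset.range (n+1),
          ((∫ t in Icc (0:ℝ) 1, |t - x| * phiK σ ((n:ℝ)*t - (k:ℝ)) ∂ρ) /
            (∫ t in Icc (0:ℝ) 1, phiK σ ((n:ℝ)*t - (k:ℝ)) ∂ρ)) * phiK σ ((n:ℝ)*x - (k:ℝ)))
          = ∑ k ∈ Finset.range (n+1), phiK σ ((n:ℝ)*x - (k:ℝ)) *
            ((∫ t in Icc (0:ℝ) 1, |t - x| * phiK σ ((n:ℝ)*t - (k:ℝ)) ∂ρ) /
              (∫ t in Icc (0:ℝ) 1, phiK σ ((n:ℝ)*t - (k:ℝ)) ∂ρ)) :=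
            Finset.sum_congr rfl fun k _ => mul_comm _ _
        _ ≤ _ := this
    set S2 : ℝ := ∑ k ∈ Finset.range (n+1), phiK σ ((n:ℝ)*x - (k:ℝ)) *
      (((∫ t in Icc (0:ℝ) 1, |t - x| * phiK σ ((n:ℝ)*t - (k:ℝ)) ∂ρ) /
        (∫ t in Icc (0:ℝ) 1, phiK σ ((n:ℝ)*t - (k:ℝ)) ∂ρ)) ^ p) with hS2def
    have hS2nn : 0 ≤ S2 :=
      Finset.sum_nonneg fun k _ => mul_nonneg (hφ0 _)
        (Real.rpow_nonneg (div_nonneg (hN0 x k) (hD0 k)) p)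
    set T : ℝ := ∑ k ∈ Finset.range (n+1),
        ((∫ t in Icc (0:ℝ) 1, |t - x| * phiK σ ((n:ℝ)*t - (k:ℝ)) ∂ρ) /
          (∫ t in Icc (0:ℝ) 1, phiK σ ((n:ℝ)*t - (k:ℝ)) ∂ρ)) * phiK σ ((n:ℝ)*x - (k:ℝ))
      with hTdef
    have hTnn : 0 ≤ T :=
      Finset.sum_nonneg fun k _ =>
        mul_nonneg (div_nonneg (hN0 x k) (hD0 k)) (hφ0 _)
    have hTp : T ^ p ≤ W ^ (p-1) * S2 := by
      calc T ^ p ≤ (W ^ (1 - p⁻¹) * S2 ^ p⁻¹) ^ p :=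
            Real.rpow_le_rpow hTnn hT hp0.le
        _ = W ^ (p-1) * S2 := by
            rw [Real.mul_rpow (Real.rpow_nonneg hWpos.le _) (Real.rpow_nonneg hS2nn _),
              ← Real.rpow_mul hWpos.le, ← Real.rpow_mul hS2nn]
            have e1 : (1 - p⁻¹) * p = p - 1 := by
              rw [sub_mul, one_mul, inv_mul_cancel₀ hpne]
            have e2 : p⁻¹ * p = 1 := inv_mul_cancel₀ hpne
            rw [e1, e2, Real.rpow_one]
    have hWppos : 0 < W ^ p := Real.rpow_pos_of_pos hWpos p
    calc |T / W| ^ p = (T / W) ^ p := by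
          rw [abs_of_nonneg (div_nonneg hTnn hWpos.le)]
      _ = T ^ p / W ^ p := Real.div_rpow hTnn hWpos.le p
      _ ≤ (W ^ (p-1) * S2) / W ^ p := by gcongr
      _ = S2 / W := by
          rw [Real.rpow_sub hWpos, Real.rpow_one]
          field_simp
      _ ≤ S2 / phiK σ 1 := by gcongr
      _ ≤ (∑ k ∈ Finset.range (n+1), phiK σ ((n:ℝ)*x - (k:ℝ)) *
            (c0 * ((∫ t in Icc (0:ℝ) 1, |(n:ℝ)*t - (k:ℝ)| ^ p * phiK σ ((n:ℝ)*t - (k:ℝ)) ∂ρ) /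
              (∫ t in Icc (0:ℝ) 1, phiK σ ((n:ℝ)*t - (k:ℝ)) ∂ρ) + |(n:ℝ)*x - (k:ℝ)| ^ p))) /
            phiK σ 1 := by
          exact (div_le_div_iff_of_pos_right hφ1).mpr (Finset.sum_le_sum hak)
      _ = g x := by rw [hgdef]
  -- integrability of g
  have hg_int : Integrable g (ρ.restrict (Icc (0:ℝ) 1)) := by
    rw [hgdef]
    refine Integrable.div_const ?_ _
    refine integrable_finset_sum _ (fun k _ => ?_)
    have e : (fun x : ℝ => phiK σ ((n:ℝ)*x - (k:ℝ)) *
        (c0 * ((∫ t in Icc (0:ℝ) 1, |(n:ℝ)*t - (k:ℝ)| ^ p * phiK σ ((n:ℝ)*t - (k:ℝ)) ∂ρ) /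
          (∫ t in Icc (0:ℝ) 1, phiK σ ((n:ℝ)*t - (k:ℝ)) ∂ρ) + |(n:ℝ)*x - (k:ℝ)| ^ p))) =
        (fun x : ℝ => (c0 * ((∫ t in Icc (0:ℝ) 1, |(n:ℝ)*t - (k:ℝ)| ^ p *
            phiK σ ((n:ℝ)*t - (k:ℝ)) ∂ρ) /
          (∫ t in Icc (0:ℝ) 1, phiK σ ((n:ℝ)*t - (k:ℝ)) ∂ρ))) * phiK σ ((n:ℝ)*x - (k:ℝ)) +
          c0 * (|(n:ℝ)*x - (k:ℝ)| ^ p * phiK σ ((n:ℝ)*x - (k:ℝ)))) := by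
      funext x; ring
    rw [e]
    exact ((hψint k).const_mul _).add ((hAint k).const_mul c0)
  -- integrate the pointwise bound
  have hInt : (∫ x in Icc (0:ℝ) 1, |nnAbsMoment ρ σ n x| ^ p ∂ρ) ≤
      ∫ x in Icc (0:ℝ) 1, g x ∂ρ := by
    refine integral_mono_of_nonneg (ae_of_all _ fun x => ?_) hg_int ?_
    · exact Real.rpow_nonneg (abs_nonneg _) p
    · filter_upwards [hmem] with x hx
      exact h_point x hx
  -- per-term integral bound
  have hterm_int : ∀ k : ℕ, Integrable (fun x : ℝ => phiK σ ((n:ℝ)*x - (k:ℝ)) *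
      (c0 * ((∫ t in Icc (0:ℝ) 1, |(n:ℝ)*t - (k:ℝ)| ^ p * phiK σ ((n:ℝ)*t - (k:ℝ)) ∂ρ) /
        (∫ t in Icc (0:ℝ) 1, phiK σ ((n:ℝ)*t - (k:ℝ)) ∂ρ) + |(n:ℝ)*x - (k:ℝ)| ^ p)))
      (ρ.restrict (Icc (0:ℝ) 1)) := by
    intro k
    have e : (fun x : ℝ => phiK σ ((n:ℝ)*x - (k:ℝ)) *
        (c0 * ((∫ t in Icc (0:ℝ) 1, |(n:ℝ)*t - (k:ℝ)| ^ p * phiK σ ((n:ℝ)*t - (k:ℝ)) ∂ρ) /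
          (∫ t in Icc (0:ℝ) 1, phiK σ ((n:ℝ)*t - (k:ℝ)) ∂ρ) + |(n:ℝ)*x - (k:ℝ)| ^ p))) =
        (fun x : ℝ => (c0 * ((∫ t in Icc (0:ℝ) 1, |(n:ℝ)*t - (k:ℝ)| ^ p *
            phiK σ ((n:ℝ)*t - (k:ℝ)) ∂ρ) /
          (∫ t in Icc (0:ℝ) 1, phiK σ ((n:ℝ)*t - (k:ℝ)) ∂ρ))) * phiK σ ((n:ℝ)*x - (k:ℝ)) +
          c0 * (|(n:ℝ)*x - (k:ℝ)| ^ p * phiK σ ((n:ℝ)*x - (k:ℝ)))) := by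
      funext x; ring
    rw [e]
    exact ((hψint k).const_mul _).add ((hAint k).const_mul c0)
  have hterm : ∀ k ∈ Finset.range (n+1),
      (∫ x in Icc (0:ℝ) 1, phiK σ ((n:ℝ)*x - (k:ℝ)) *
        (c0 * ((∫ t in Icc (0:ℝ) 1, |(n:ℝ)*t - (k:ℝ)| ^ p * phiK σ ((n:ℝ)*t - (k:ℝ)) ∂ρ) /
          (∫ t in Icc (0:ℝ) 1, phiK σ ((n:ℝ)*t - (k:ℝ)) ∂ρ) + |(n:ℝ)*x - (k:ℝ)| ^ p)) ∂ρ)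
      ≤ 2 * c0 * (∫ t in Icc (0:ℝ) 1, |(n:ℝ)*t - (k:ℝ)| ^ p * phiK σ ((n:ℝ)*t - (k:ℝ)) ∂ρ) := by
    intro k _
    set D : ℝ := ∫ t in Icc (0:ℝ) 1, phiK σ ((n:ℝ)*t - (k:ℝ)) ∂ρ with hDdef
    set A : ℝ := ∫ t in Icc (0:ℝ) 1, |(n:ℝ)*t - (k:ℝ)| ^ p * phiK σ ((n:ℝ)*t - (k:ℝ)) ∂ρ
      with hAdef
    have e : (fun x : ℝ => phiK σ ((n:ℝ)*x - (k:ℝ)) * (c0 * (A / D + |(n:ℝ)*x - (k:ℝ)| ^ p))) =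
        (fun x : ℝ => (c0 * (A / D)) * phiK σ ((n:ℝ)*x - (k:ℝ)) +
          c0 * (|(n:ℝ)*x - (k:ℝ)| ^ p * phiK σ ((n:ℝ)*x - (k:ℝ)))) := by
      funext x; ring
    rw [e, integral_add ((hψint k).const_mul _) ((hAint k).const_mul c0),
      integral_const_mul, integral_const_mul, ← hDdef, ← hAdef]
    have hA0' : 0 ≤ A := hA0 k
    have hqD : c0 * (A / D) * D ≤ c0 * A := by
      rcases eq_or_lt_of_le (hD0 k) with h | h
      · rw [← hDdef] at h
        rw [← h, mul_zero]
        exact mul_nonneg hc00 hA0'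
      · rw [← hDdef] at h
        rw [mul_assoc, div_mul_cancel₀ _ (ne_of_gt h)]
    linarith
  -- evaluate the integral of g
  have hgval : (∫ x in Icc (0:ℝ) 1, g x ∂ρ) ≤ 2 * c0 * (M * R) / phiK σ 1 := by
    simp only [hgdef]
    rw [integral_div]
    refine (div_le_div_iff_of_pos_right hφ1).mpr ?_
    calc (∫ x in Icc (0:ℝ) 1, ∑ k ∈ Finset.range (n+1), phiK σ ((n:ℝ)*x - (k:ℝ)) *
          (c0 * ((∫ t in Icc (0:ℝ) 1, |(n:ℝ)*t - (k:ℝ)| ^ p * phiK σ ((n:ℝ)*t - (k:ℝ)) ∂ρ) /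
            (∫ t in Icc (0:ℝ) 1, phiK σ ((n:ℝ)*t - (k:ℝ)) ∂ρ) + |(n:ℝ)*x - (k:ℝ)| ^ p)) ∂ρ)
        = ∑ k ∈ Finset.range (n+1), ∫ x in Icc (0:ℝ) 1, phiK σ ((n:ℝ)*x - (k:ℝ)) *
          (c0 * ((∫ t in Icc (0:ℝ) 1, |(n:ℝ)*t - (k:ℝ)| ^ p * phiK σ ((n:ℝ)*t - (k:ℝ)) ∂ρ) /
            (∫ t in Icc (0:ℝ) 1, phiK σ ((n:ℝ)*t - (k:ℝ)) ∂ρ) + |(n:ℝ)*x - (k:ℝ)| ^ p)) ∂ρ :=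
          integral_finset_sum _ (fun k _ => hterm_int k)
      _ ≤ ∑ k ∈ Finset.range (n+1), 2 * c0 *
            (∫ t in Icc (0:ℝ) 1, |(n:ℝ)*t - (k:ℝ)| ^ p * phiK σ ((n:ℝ)*t - (k:ℝ)) ∂ρ) :=
          Finset.sum_le_sum hterm
      _ = 2 * c0 * ∑ k ∈ Finset.range (n+1),
            (∫ t in Icc (0:ℝ) 1, |(n:ℝ)*t - (k:ℝ)| ^ p * phiK σ ((n:ℝ)*t - (k:ℝ)) ∂ρ) := by
          rw [Finset.mul_sum]
      _ ≤ 2 * c0 * (M * R) := by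
          refine mul_le_mul_of_nonneg_left hAsum (by positivity)
  -- final comparison
  have hle2 : 2 * c0 * (M * R) / phiK σ 1 ≤ K / (n:ℝ) ^ p := by
    have h2p : (2:ℝ) ^ (p+1) = 2 ^ p * 2 := by
      rw [Real.rpow_add (by norm_num : (0:ℝ) < 2) p 1, Real.rpow_one]
    have h2pp : (0:ℝ) < 2 ^ p := Real.rpow_pos_of_pos (by norm_num) p
    have e : 2 * c0 * (M * R) / phiK σ 1 = (2 ^ p * 2 * (M * R) / phiK σ 1) / (n:ℝ) ^ p := by
      rw [hc0def]
      field_simp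
    rw [e, hKdef, h2p]
    refine (div_le_div_iff_of_pos_right hnp).mpr ?_
    refine (div_le_div_iff_of_pos_right hφ1).mpr ?_
    nlinarith [hM0, hR0]
  have hI0 : 0 ≤ ∫ x in Icc (0:ℝ) 1, |nnAbsMoment ρ σ n x| ^ p ∂ρ :=
    integral_nonneg fun x => Real.rpow_nonneg (abs_nonneg _) p
  unfold LpNorm1
  calc (∫ x in Icc (0:ℝ) 1, |nnAbsMoment ρ σ n x| ^ p ∂ρ) ^ (1/p)
      ≤ (K / (n:ℝ) ^ p) ^ (1/p) := by
        refine Real.rpow_le_rpow hI0 ?_ (by positivity)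
        exact (hInt.trans hgval).trans hle2
    _ = K ^ (1/p) / (n:ℝ) := by
        rw [Real.div_rpow hKpos.le hnp.le (1/p)]
        congr 1
        rw [← Real.rpow_mul hnpos.le, mul_one_div_cancel hpne, Real.rpow_one]
end
end

section
/- Let 1 ≤ p < ∞, let ρ be a bounded Borel measure on I = [0,1], and assume M_p(φ_σ) < ∞. Then there is a constant C > 0 such that for every g ∈ W^{1,∞}(I) (i.e. g and its weak derivative g' are essentially bounded on I) and every n ∈ ℕ, ‖S_n^ρ g − g‖_{L^p(I,ρ)} ≤ C ‖g'‖_∞ / n. -/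
open MeasureTheory Set Filter Topology

noncomputable section

/-- The coefficient `c_{n,k} = (∫₀¹ f(t) φ_σ(nt−k) dρ) / (∫₀¹ φ_σ(nt−k) dρ)`. -/
def nnCoeff (ρ : Measure ℝ) (σ : ℝ → ℝ) (f : ℝ → ℝ) (n k : ℕ) : ℝ :=
  (∫ t in Icc (0:ℝ) 1, f t * phiK σ ((n : ℝ) * t - (k : ℝ)) ∂ρ) /
    ∫ t in Icc (0:ℝ) 1, phiK σ ((n : ℝ) * t - (k : ℝ)) ∂ρ

/-- The neural network operator `S_n^ρ f`. -/
def nnOp (ρ : Measure ℝ) (σ : ℝ → ℝ) (f : ℝ → ℝ) (n : ℕ) (x : ℝ) : ℝ :=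
  (∑ k ∈ Finset.range (n + 1), nnCoeff ρ σ f n k * phiK σ ((n : ℝ) * x - (k : ℝ))) /
    ∑ k ∈ Finset.range (n + 1), phiK σ ((n : ℝ) * x - (k : ℝ))

lemma aux_moment_bound {σ : ℝ → ℝ} {p : ℝ} (hφ0 : ∀ x, 0 ≤ phiK σ x) (hM : MomentFin σ p)
    (u : ℝ) (s : Finset ℕ) :
    ∑ k ∈ s, |u - (k : ℝ)| ^ p * phiK σ (u - (k : ℝ)) ≤
      (⨆ x : ℝ, ∑' k : ℤ, ENNReal.ofReal (|x - (k : ℝ)| ^ p * phiK σ (x - (k : ℝ)))).toReal := by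
  set M := ⨆ x : ℝ, ∑' k : ℤ, ENNReal.ofReal (|x - (k : ℝ)| ^ p * phiK σ (x - (k : ℝ)))
  have hnn : ∀ k : ℕ, 0 ≤ |u - (k : ℝ)| ^ p * phiK σ (u - (k : ℝ)) := fun k =>
    mul_nonneg (Real.rpow_nonneg (abs_nonneg _) _) (hφ0 _)
  have h1 : ENNReal.ofReal (∑ k ∈ s, |u - (k : ℝ)| ^ p * phiK σ (u - (k : ℝ))) ≤ M := by
    rw [ENNReal.ofReal_sum_of_nonneg]
    · calc ∑ k ∈ s, ENNReal.ofReal (|u - (k : ℝ)| ^ p * phiK σ (u - (k : ℝ)))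
          = ∑ k ∈ s.map ⟨(Nat.cast : ℕ → ℤ), Nat.cast_injective⟩,
              ENNReal.ofReal (|u - (k : ℝ)| ^ p * phiK σ (u - (k : ℝ))) := by
            rw [Finset.sum_map]; simp
        _ ≤ ∑' k : ℤ, ENNReal.ofReal (|u - (k : ℝ)| ^ p * phiK σ (u - (k : ℝ))) :=
            ENNReal.sum_le_tsum _
        _ ≤ M := le_iSup (fun x : ℝ => ∑' k : ℤ,
              ENNReal.ofReal (|x - (k : ℝ)| ^ p * phiK σ (x - (k : ℝ)))) u
    · intro k _ ; exact hnn k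
  calc ∑ k ∈ s, |u - (k : ℝ)| ^ p * phiK σ (u - (k : ℝ))
      = (ENNReal.ofReal (∑ k ∈ s, |u - (k : ℝ)| ^ p * phiK σ (u - (k : ℝ)))).toReal := by
        rw [ENNReal.toReal_ofReal (Finset.sum_nonneg fun k _ => hnn k)]
    _ ≤ M.toReal := ENNReal.toReal_mono hM.ne h1

lemma aux_part_bound {σ : ℝ → ℝ} (hφ0 : ∀ x, 0 ≤ phiK σ x)
    (hsum : ∀ x : ℝ, ∑' k : ℤ, phiK σ (x - (k : ℝ)) = 1) (u : ℝ) (s : Finset ℕ) :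
    ∑ k ∈ s, phiK σ (u - (k : ℝ)) ≤ 1 := by
  have hs : Summable (fun k : ℤ => phiK σ (u - (k : ℝ))) := by
    by_contra h
    have := tsum_eq_zero_of_not_summable h
    rw [hsum u] at this; norm_num at this
  calc ∑ k ∈ s, phiK σ (u - (k : ℝ))
      = ∑ k ∈ s.map ⟨(Nat.cast : ℕ → ℤ), Nat.cast_injective⟩, phiK σ (u - (k : ℝ)) := by
        rw [Finset.sum_map]; simp
    _ ≤ ∑' k : ℤ, phiK σ (u - (k : ℝ)) :=
        hs.sum_le_tsum _ (fun k _ => hφ0 _)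
    _ = 1 := hsum u


/-- Weighted integral Jensen inequality via Hölder. -/
lemma aux_jensen {μ : Measure ℝ} [IsFiniteMeasure μ] {f w : ℝ → ℝ} {p : ℝ} (hp : 1 ≤ p)
    (hf : AEMeasurable f μ) (hw : AEMeasurable w μ)
    (hf0 : ∀ᵐ t ∂μ, 0 ≤ f t) (hw0 : ∀ᵐ t ∂μ, 0 ≤ w t)
    {Cf Cw : ℝ} (hfb : ∀ᵐ t ∂μ, f t ≤ Cf) (hwb : ∀ᵐ t ∂μ, w t ≤ Cw)
    (hD : 0 < ∫ t, w t ∂μ) :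
    ((∫ t, f t * w t ∂μ) / ∫ t, w t ∂μ) ^ p ≤ (∫ t, f t ^ p * w t ∂μ) / ∫ t, w t ∂μ := by
  set D := ∫ t, w t ∂μ with hDdef
  rcases eq_or_lt_of_le hp with hp1 | hp1
  · rw [← hp1]
    simp only [Real.rpow_one]
    exact le_refl _
  · -- p > 1
    have hp0 : 0 < p := lt_of_lt_of_le one_pos hp
    set q := p / (p - 1) with hqdef
    have hpq : Real.HolderConjugate p q := Real.HolderConjugate.conjExponent hp1
    have hq0 : 0 < q := hpq.symm.pos
    set F := fun t => f t * w t ^ (1 / p) with hF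
    set G := fun t => w t ^ (1 / q) with hG
    have hwp : AEMeasurable (fun t => w t ^ (1 / p)) μ :=
      (Real.continuous_rpow_const (by positivity)).measurable.comp_aemeasurable hw
    have hFmeas : AEMeasurable F μ := hf.mul hwp
    have hGmeas : AEMeasurable G μ :=
      (Real.continuous_rpow_const (by positivity)).measurable.comp_aemeasurable hw
    have hF0 : 0 ≤ᵐ[μ] F := by
      filter_upwards [hf0, hw0] with t h1 h2 using mul_nonneg h1 (Real.rpow_nonneg h2 _)
    have hG0 : 0 ≤ᵐ[μ] G := by
      filter_upwards [hw0] with t h2 using Real.rpow_nonneg h2 _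
    have hFmem : MemLp F (ENNReal.ofReal p) μ := by
      refine MemLp.of_bound hFmeas.aestronglyMeasurable (|Cf| * |Cw| ^ (1 / p)) ?_
      filter_upwards [hf0, hw0, hfb, hwb] with t h1 h2 h3 h4
      rw [Real.norm_eq_abs, abs_mul, abs_of_nonneg (Real.rpow_nonneg h2 _), abs_of_nonneg h1]
      refine mul_le_mul (le_trans h3 (le_abs_self _))
        (Real.rpow_le_rpow h2 (le_trans h4 (le_abs_self _)) (by positivity))
        (Real.rpow_nonneg h2 _) (abs_nonneg _)
    have hGmem : MemLp G (ENNReal.ofReal q) μ := by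
      refine MemLp.of_bound hGmeas.aestronglyMeasurable (|Cw| ^ (1 / q)) ?_
      filter_upwards [hw0, hwb] with t h2 h4
      rw [Real.norm_eq_abs, abs_of_nonneg (Real.rpow_nonneg h2 _)]
      exact Real.rpow_le_rpow h2 (le_trans h4 (le_abs_self _)) (by positivity)
    have holder := integral_mul_le_Lp_mul_Lq_of_nonneg hpq hF0 hG0 hFmem hGmem
    have hFG : ∀ᵐ t ∂μ, F t * G t = f t * w t := by
      filter_upwards [hw0] with t h2
      have hsum1 : 1 / p + 1 / q = 1 := by
        rw [one_div, one_div, hpq.inv_add_inv_eq_one]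
      rw [hF, hG, mul_assoc, ← Real.rpow_add' h2 (by rw [hsum1]; norm_num), hsum1,
        Real.rpow_one]
    have hFp : ∀ᵐ t ∂μ, F t ^ p = f t ^ p * w t := by
      filter_upwards [hf0, hw0] with t h1 h2
      rw [hF, Real.mul_rpow h1 (Real.rpow_nonneg h2 _), ← Real.rpow_mul h2,
        one_div_mul_cancel hp0.ne', Real.rpow_one]
    have hGq : ∀ᵐ t ∂μ, G t ^ q = w t := by
      filter_upwards [hw0] with t h2
      rw [hG, ← Real.rpow_mul h2, one_div_mul_cancel hq0.ne', Real.rpow_one]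
    rw [integral_congr_ae hFG, integral_congr_ae hFp, integral_congr_ae hGq] at holder
    set A := ∫ t, f t ^ p * w t ∂μ with hA
    have hA0 : 0 ≤ A := integral_nonneg_of_ae (by
      filter_upwards [hf0, hw0] with t h1 h2 using mul_nonneg (Real.rpow_nonneg h1 _) h2)
    have hfw0 : 0 ≤ ∫ t, f t * w t ∂μ := integral_nonneg_of_ae (by
      filter_upwards [hf0, hw0] with t h1 h2 using mul_nonneg h1 h2)
    have hDp : (0:ℝ) < D ^ p := Real.rpow_pos_of_pos hD p
    have key : (∫ t, f t * w t ∂μ) ^ p ≤ A * D ^ (p - 1) := by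
      calc (∫ t, f t * w t ∂μ) ^ p ≤ (A ^ (1/p) * D ^ (1/q)) ^ p :=
            Real.rpow_le_rpow hfw0 holder hp0.le
        _ = A * D ^ (p - 1) := by
            rw [Real.mul_rpow (Real.rpow_nonneg hA0 _) (Real.rpow_nonneg hD.le _),
              ← Real.rpow_mul hA0, ← Real.rpow_mul hD.le, one_div_mul_cancel hp0.ne',
              Real.rpow_one]
            congr 1
            rw [hqdef]
            field_simp
    calc ((∫ t, f t * w t ∂μ) / D) ^ p = (∫ t, f t * w t ∂μ) ^ p / D ^ p :=
          Real.div_rpow hfw0 hD.le p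
      _ ≤ A * D ^ (p - 1) / D ^ p := by gcongr
      _ = A / D := by
          rw [Real.rpow_sub hD, Real.rpow_one]
          field_simp


set_option maxHeartbeats 2000000 in
/-- if `M_p(φ_σ) < ∞`, there is `C > 0` such that for every
`g ∈ W^{1,∞}(I)` (i.e. `|g(t) − g(x)| ≤ ‖g'‖_∞ |t − x|` on `[0,1]`, with `L = ‖g'‖_∞`)
and every `n`, `‖S_n^ρ g − g‖_{L^p(I,ρ)} ≤ C L / n`. -/
theorem statement6 (σ : ℝ → ℝ) (hσ : Sigmoidal σ) (hker : KernelStd σ)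
    (ρ : Measure ℝ) [IsFiniteMeasure ρ]
    (p : ℝ) (hp : 1 ≤ p) (hM : MomentFin σ p) :
    ∃ C > (0:ℝ), ∀ g : ℝ → ℝ, ∀ L : ℝ, 0 ≤ L →
      (∀ x ∈ Icc (0:ℝ) 1, ∀ t ∈ Icc (0:ℝ) 1, |g t - g x| ≤ L * |t - x|) →
      ∀ n : ℕ, 0 < n →
        LpNorm1 ρ p (fun x => nnOp ρ σ g n x - g x) ≤ C * L / n := by
  obtain ⟨hφ0, hφ1pos, hφsum, hφlow⟩ := hker
  have hp0 : 0 < p := lt_of_lt_of_le one_pos hp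
  have hσle : ∀ x, σ x ≤ 1 := fun x => hσ.1.ge_of_tendsto hσ.2.2 x
  have hσ0 : ∀ x, 0 ≤ σ x := fun x => hσ.1.le_of_tendsto hσ.2.1 x
  have hφle : ∀ x, phiK σ x ≤ 1 := fun x => by
    unfold phiK; linarith [hσ0 (x - 1), hσle (x + 1)]
  have hσm : Measurable σ := hσ.1.measurable
  have hφm : Measurable (phiK σ) := by
    unfold phiK
    exact ((hσm.comp (measurable_id.add_const 1)).sub
      (hσm.comp (measurable_id.sub_const 1))).div_const 2
  set m := phiK σ 1 with hm
  set Mr := (⨆ x : ℝ, ∑' k : ℤ,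
      ENNReal.ofReal (|x - (k : ℝ)| ^ p * phiK σ (x - (k : ℝ)))).toReal with hMrdef
  have hMr0 : 0 ≤ Mr := ENNReal.toReal_nonneg
  set ρI := (ρ (Icc (0:ℝ) 1)).toReal with hρIdef
  have hρI0 : 0 ≤ ρI := ENNReal.toReal_nonneg
  set B := 2 * (Mr + 1) * (ρI + 1) / m with hBdef
  have hB0 : 0 < B := by
    apply div_pos _ hφ1pos
    positivity
  refine ⟨2 * B ^ (1/p), mul_pos two_pos (Real.rpow_pos_of_pos hB0 _), ?_⟩
  intro g L hL hg n hn
  have hn0 : (0:ℝ) < n := by exact_mod_cast hn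
  have hLn' : (0:ℝ) ≤ L / n := div_nonneg hL hn0.le
  have h2Ln : (0:ℝ) ≤ 2 * L / n := div_nonneg (by linarith) hn0.le
  have h2Lnp : (0:ℝ) ≤ (2 * L / n) ^ p := Real.rpow_nonneg h2Ln p
  set μ := ρ.restrict (Icc (0:ℝ) 1) with hμdef
  set φf : ℕ → ℝ → ℝ := fun k t => phiK σ ((n:ℝ) * t - (k:ℝ)) with hφf
  set D : ℕ → ℝ := fun k => ∫ t in Icc (0:ℝ) 1, φf k t ∂ρ with hDdef
  set N : ℕ → ℝ := fun k => ∫ t in Icc (0:ℝ) 1, g t * φf k t ∂ρ with hNdef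
  set F : ℕ → ℝ := fun k => ∫ t in Icc (0:ℝ) 1, |(n:ℝ) * t - (k:ℝ)| ^ p * φf k t ∂ρ with hFdef
  set K : Finset ℕ := (Finset.range (n+1)).filter (fun k => 0 < D k) with hKdef
  -- continuity and boundedness of g on I
  have hgc : ContinuousOn g (Icc (0:ℝ) 1) := by
    have : LipschitzOnWith (Real.toNNReal L) g (Icc (0:ℝ) 1) := by
      rw [lipschitzOnWith_iff_dist_le_mul]
      intro x hx y hy
      rw [Real.dist_eq, Real.dist_eq]
      calc |g x - g y| ≤ L * |x - y| := hg y hy x hx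
        _ ≤ (Real.toNNReal L) * |x - y| := by
            gcongr
            exact Real.le_coe_toNNReal L
    exact this.continuousOn
  have hgaem : AEMeasurable g μ := hgc.aemeasurable measurableSet_Icc
  have hgbd : ∀ x ∈ Icc (0:ℝ) 1, |g x| ≤ |g 0| + L := by
    intro x hx
    have h1 : |g x - g 0| ≤ L * |x - 0| := hg 0 (Set.left_mem_Icc.2 zero_le_one) x hx
    have h2 : |x - 0| ≤ 1 := by
      rw [sub_zero, abs_of_nonneg hx.1]; exact hx.2
    calc |g x| = |g 0 + (g x - g 0)| := by ring_nf
      _ ≤ |g 0| + |g x - g 0| := abs_add_le _ _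
      _ ≤ |g 0| + L * |x - 0| := by linarith
      _ ≤ |g 0| + L := by nlinarith
  -- measurability and integrability of kernels
  have hφfm : ∀ k, Measurable (φf k) := fun k =>
    hφm.comp ((measurable_id.const_mul _).sub_const _)
  have hφf_nn : ∀ k t, 0 ≤ φf k t := fun k t => hφ0 _
  have hφf_int : ∀ k, Integrable (φf k) μ := fun k => by
    refine Integrable.mono' (integrable_const 1) (hφfm k).aestronglyMeasurable ?_
    filter_upwards with t
    rw [Real.norm_eq_abs, abs_of_nonneg (hφf_nn k t)]
    exact hφle _
  have hgφ_int : ∀ k, Integrable (fun t => g t * φf k t) μ := fun k => by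
    refine Integrable.mono' (integrable_const (|g 0| + L))
      (hgaem.mul (hφfm k).aemeasurable).aestronglyMeasurable ?_
    filter_upwards [ae_restrict_mem measurableSet_Icc] with t ht
    rw [Real.norm_eq_abs, abs_mul, abs_of_nonneg (hφf_nn k t)]
    calc |g t| * φf k t ≤ (|g 0| + L) * 1 :=
          mul_le_mul (hgbd t ht) (hφle _) (hφf_nn k t) (by positivity)
      _ = |g 0| + L := mul_one _
  have habs_m : ∀ k : ℕ, Measurable (fun t => |(n:ℝ) * t - (k:ℝ)| ^ p) := fun k =>
    (Real.continuous_rpow_const hp0.le).measurable.comp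
      ((measurable_id.const_mul _).sub_const _).abs
  have hF_int : ∀ k : ℕ, Integrable (fun t => |(n:ℝ) * t - (k:ℝ)| ^ p * φf k t) μ := fun k => by
    refine Integrable.mono' (integrable_const (((n:ℝ) + k + 1) ^ p))
      ((habs_m k).mul (hφfm k)).aestronglyMeasurable ?_
    filter_upwards [ae_restrict_mem measurableSet_Icc] with t ht
    rw [Real.norm_eq_abs, abs_mul, abs_of_nonneg (hφf_nn k t),
      abs_of_nonneg (Real.rpow_nonneg (abs_nonneg _) _)]
    have hk0 : (0:ℝ) ≤ (k:ℝ) := Nat.cast_nonneg k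
    have h1 : |(n:ℝ) * t - (k:ℝ)| ≤ (n:ℝ) + k + 1 := by
      rw [abs_sub_le_iff]
      constructor
      · have h2 : (n:ℝ) * t ≤ n := by nlinarith [ht.1, ht.2]
        nlinarith
      · have h2 : 0 ≤ (n:ℝ) * t := mul_nonneg hn0.le ht.1
        nlinarith
    have hnk1 : (0:ℝ) ≤ (n:ℝ) + k + 1 := by positivity
    calc |(n:ℝ) * t - (k:ℝ)| ^ p * φf k t ≤ ((n:ℝ) + k + 1) ^ p * 1 :=
          mul_le_mul (Real.rpow_le_rpow (abs_nonneg _) h1 hp0.le) (hφle _)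
            (hφf_nn k t) (Real.rpow_nonneg hnk1 p)
      _ = ((n:ℝ) + k + 1) ^ p := mul_one _
  have hDnn : ∀ k, 0 ≤ D k := fun k => integral_nonneg (fun t => hφf_nn k t)
  have hFnn : ∀ k, 0 ≤ F k := fun k => integral_nonneg (fun t =>
    mul_nonneg (Real.rpow_nonneg (abs_nonneg _) _) (hφf_nn k t))
  -- vanishing of kernels with zero-mass coefficients
  have hvanish : ∀ᵐ x ∂μ, ∀ k ∈ Finset.range (n+1), k ∉ K → φf k x = 0 := by
    rw [eventually_all_finset]
    intro k hk
    by_cases hkK : k ∈ K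
    · filter_upwards with x h
      exact absurd hkK h
    · have hDk : D k = 0 := by
        have : ¬ 0 < D k := by
          intro h
          exact hkK (Finset.mem_filter.2 ⟨hk, h⟩)
        linarith [hDnn k]
      have h0 : φf k =ᵐ[μ] 0 :=
        (integral_eq_zero_iff_of_nonneg (fun t => hφf_nn k t) (hφf_int k)).1 hDk
      filter_upwards [h0] with x hx _
      exact hx
  -- moment and partition bounds
  have hMom : ∀ x : ℝ, ∑ k ∈ Finset.range (n+1), |(n:ℝ)*x - (k:ℝ)| ^ p * φf k x ≤ Mr :=
    fun x => aux_moment_bound hφ0 hM ((n:ℝ)*x) _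
  have hPart : ∀ x : ℝ, ∑ k ∈ Finset.range (n+1), φf k x ≤ 1 :=
    fun x => aux_part_bound hφ0 hφsum ((n:ℝ)*x) _
  -- the key pointwise estimate
  have hkey : ∀ᵐ x ∂μ, |nnOp ρ σ g n x - g x| ^ p ≤
      (1/m) * ((2*L/n) ^ p) * ((∑ k ∈ K, (F k / D k) * φf k x) + Mr) := by
    filter_upwards [ae_restrict_mem measurableSet_Icc, hvanish] with x hxI hxv
    set W := ∑ k ∈ Finset.range (n+1), φf k x with hWdef
    have hmW : m ≤ W := hφlow n x hxI
    have hW0 : 0 < W := lt_of_lt_of_le hφ1pos hmW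
    have hKsum : ∑ k ∈ K, φf k x = W := by
      rw [hKdef]
      refine Finset.sum_filter_of_ne ?_
      intro k hk hne
      by_contra h
      exact hne (hxv k hk (by simp [hKdef, Finset.mem_filter, h]))
    -- rewrite the operator difference
    have hdiff : nnOp ρ σ g n x - g x = (∑ k ∈ K, (N k / D k - g x) * φf k x) / W := by
      have h1 : nnOp ρ σ g n x =
          (∑ k ∈ Finset.range (n+1), (N k / D k) * φf k x) / W := rfl
      have h2 : ∑ k ∈ Finset.range (n+1), (N k / D k) * φf k x
          = ∑ k ∈ K, (N k / D k) * φf k x := by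
        rw [hKdef]
        refine (Finset.sum_filter_of_ne ?_).symm
        intro k hk hne
        by_contra h
        exact hne (by rw [hxv k hk (by simp [hKdef, Finset.mem_filter, h])]; ring)
      have h4 : ∑ k ∈ K, (N k / D k - g x) * φf k x
          = (∑ k ∈ K, (N k / D k) * φf k x) - g x * W := by
        rw [← hKsum, Finset.mul_sum, ← Finset.sum_sub_distrib]
        exact Finset.sum_congr rfl fun k _ => by ring
      rw [h1, h2, h4, sub_div, mul_div_assoc, div_self hW0.ne', mul_one]
    have habs : |nnOp ρ σ g n x - g x| ≤
        ∑ k ∈ K, (φf k x / W) * |N k / D k - g x| := by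
      rw [hdiff, abs_div, abs_of_pos hW0]
      calc |∑ k ∈ K, (N k / D k - g x) * φf k x| / W
          ≤ (∑ k ∈ K, |N k / D k - g x| * φf k x) / W := by
            gcongr
            refine le_trans (Finset.abs_sum_le_sum_abs _ _)
              (Finset.sum_le_sum fun k _ => ?_)
            rw [abs_mul, abs_of_nonneg (hφf_nn k x)]
        _ = ∑ k ∈ K, (φf k x / W) * |N k / D k - g x| := by
            rw [Finset.sum_div]
            exact Finset.sum_congr rfl fun k _ => by ring
    -- discrete Jensen
    have hjensen : (∑ k ∈ K, (φf k x / W) * |N k / D k - g x|) ^ p ≤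
        ∑ k ∈ K, (φf k x / W) * |N k / D k - g x| ^ p := by
      refine Real.rpow_arith_mean_le_arith_mean_rpow K _ _
        (fun k _ => div_nonneg (hφf_nn k x) hW0.le) ?_ (fun k _ => abs_nonneg _) hp
      rw [← Finset.sum_div, hKsum, div_self hW0.ne']
    -- per-coefficient bound
    have hcoeff : ∀ k ∈ K, |N k / D k - g x| ^ p ≤
        (2*L/n) ^ p * (F k / D k + |(n:ℝ)*x - (k:ℝ)| ^ p) := by
      intro k hk
      have hDk : 0 < D k := (Finset.mem_filter.1 hk).2
      have hsub : N k - D k * g x = ∫ t in Icc (0:ℝ) 1, (g t - g x) * φf k t ∂ρ := by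
        rw [hNdef, hDdef]
        simp only
        rw [mul_comm, ← integral_const_mul, ← integral_sub (hgφ_int k) ((hφf_int k).const_mul (g x))]
        congr 1
        funext t
        ring
      have habs2 : |N k / D k - g x| ≤
          (∫ t in Icc (0:ℝ) 1, |g t - g x| * φf k t ∂ρ) / D k := by
        rw [div_sub' hDk.ne', abs_div, abs_of_pos hDk]
        gcongr
        rw [hsub]
        calc |∫ t in Icc (0:ℝ) 1, (g t - g x) * φf k t ∂ρ|
            = ‖∫ t in Icc (0:ℝ) 1, (g t - g x) * φf k t ∂ρ‖ := (Real.norm_eq_abs _).symm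
          _ ≤ ∫ t in Icc (0:ℝ) 1, ‖(g t - g x) * φf k t‖ ∂ρ := norm_integral_le_integral_norm _
          _ = ∫ t in Icc (0:ℝ) 1, |g t - g x| * φf k t ∂ρ := by
              refine integral_congr_ae ?_
              filter_upwards with t
              rw [Real.norm_eq_abs, abs_mul, abs_of_nonneg (hφf_nn k t)]
      have hfaem : AEMeasurable (fun t => |g t - g x|) μ :=
        (continuous_abs.measurable).comp_aemeasurable (hgaem.sub aemeasurable_const)
      have hjen : ((∫ t in Icc (0:ℝ) 1, |g t - g x| * φf k t ∂ρ) / D k) ^ p ≤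
          (∫ t in Icc (0:ℝ) 1, |g t - g x| ^ p * φf k t ∂ρ) / D k := by
        refine aux_jensen hp hfaem (hφfm k).aemeasurable ?_ ?_
          (Cf := |g 0| + L + |g x|) (Cw := 1) ?_ ?_ hDk
        · filter_upwards with t using abs_nonneg _
        · filter_upwards with t using hφf_nn k t
        · filter_upwards [ae_restrict_mem measurableSet_Icc] with t ht
          calc |g t - g x| ≤ |g t| + |g x| := abs_sub _ _
            _ ≤ |g 0| + L + |g x| := by linarith [hgbd t ht]
        · filter_upwards with t using hφle _
      have hptwise : ∫ t in Icc (0:ℝ) 1, |g t - g x| ^ p * φf k t ∂ρ ≤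
          (2*L/n) ^ p * (F k + |(n:ℝ)*x - (k:ℝ)| ^ p * D k) := by
        have hrhs_int : Integrable (fun t =>
            (2*L/n) ^ p * (|(n:ℝ)*t - (k:ℝ)| ^ p * φf k t
              + |(n:ℝ)*x - (k:ℝ)| ^ p * φf k t)) μ :=
          (((hF_int k).add ((hφf_int k).const_mul _))).const_mul _
        have hmono : ∀ t ∈ Icc (0:ℝ) 1, |g t - g x| ^ p * φf k t ≤
            (2*L/n) ^ p * (|(n:ℝ)*t - (k:ℝ)| ^ p * φf k t
              + |(n:ℝ)*x - (k:ℝ)| ^ p * φf k t) := by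
          intro t ht
          have e1 : |g t - g x| ≤ (L/n) * (|(n:ℝ)*t - (k:ℝ)| + |(n:ℝ)*x - (k:ℝ)|) := by
            calc |g t - g x| ≤ L * |t - x| := hg x hxI t ht
              _ = (L/n) * |(n:ℝ)*t - (n:ℝ)*x| := by
                  rw [← mul_sub, abs_mul, abs_of_pos hn0]
                  field_simp
              _ ≤ (L/n) * (|(n:ℝ)*t - (k:ℝ)| + |(n:ℝ)*x - (k:ℝ)|) := by
                  refine mul_le_mul_of_nonneg_left ?_ hLn'
                  calc |(n:ℝ)*t - (n:ℝ)*x| = |((n:ℝ)*t - k) - ((n:ℝ)*x - k)| := by ring_nf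
                    _ ≤ |(n:ℝ)*t - (k:ℝ)| + |(n:ℝ)*x - (k:ℝ)| := abs_sub _ _
          have e2 : |g t - g x| ^ p ≤
              ((L/n) * (|(n:ℝ)*t - (k:ℝ)| + |(n:ℝ)*x - (k:ℝ)|)) ^ p :=
            Real.rpow_le_rpow (abs_nonneg _) e1 hp0.le
          have e3 : ((L/n) * (|(n:ℝ)*t - (k:ℝ)| + |(n:ℝ)*x - (k:ℝ)|)) ^ p ≤
              (2*L/n) ^ p * (|(n:ℝ)*t - (k:ℝ)| ^ p + |(n:ℝ)*x - (k:ℝ)| ^ p) := by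
            set a := |(n:ℝ)*t - (k:ℝ)| with ha
            set b := |(n:ℝ)*x - (k:ℝ)| with hb
            have ha0 : 0 ≤ a := abs_nonneg _
            have hb0 : 0 ≤ b := abs_nonneg _
            have hab : a + b ≤ 2 * max a b := by
              rcases le_total a b with h | h
              · rw [max_eq_right h]; linarith
              · rw [max_eq_left h]; linarith
            have hmax0 : 0 ≤ max a b := le_trans ha0 (le_max_left a b)
            calc ((L/n) * (a + b)) ^ p ≤ ((L/n) * (2 * max a b)) ^ p := by
                  refine Real.rpow_le_rpow (mul_nonneg hLn' (by linarith)) ?_ hp0.le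
                  exact mul_le_mul_of_nonneg_left hab hLn'
              _ = (2*L/n) ^ p * (max a b) ^ p := by
                  rw [show (L/n) * (2 * max a b) = (2*L/n) * max a b by ring,
                    Real.mul_rpow h2Ln hmax0]
              _ ≤ (2*L/n) ^ p * (a ^ p + b ^ p) := by
                  gcongr
                  rcases max_cases a b with ⟨hmax, _⟩ | ⟨hmax, _⟩
                  · rw [hmax]
                    nlinarith [Real.rpow_nonneg hb0 p, Real.rpow_nonneg ha0 p]
                  · rw [hmax]
                    nlinarith [Real.rpow_nonneg hb0 p, Real.rpow_nonneg ha0 p]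
          calc |g t - g x| ^ p * φf k t
              ≤ ((2*L/n) ^ p * (|(n:ℝ)*t - (k:ℝ)| ^ p + |(n:ℝ)*x - (k:ℝ)| ^ p)) * φf k t := by
                gcongr
                · exact hφf_nn k t
                · exact le_trans e2 e3
            _ = (2*L/n) ^ p * (|(n:ℝ)*t - (k:ℝ)| ^ p * φf k t
                  + |(n:ℝ)*x - (k:ℝ)| ^ p * φf k t) := by ring
        calc ∫ t in Icc (0:ℝ) 1, |g t - g x| ^ p * φf k t ∂ρ
            ≤ ∫ t in Icc (0:ℝ) 1, (2*L/n) ^ p * (|(n:ℝ)*t - (k:ℝ)| ^ p * φf k t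
                + |(n:ℝ)*x - (k:ℝ)| ^ p * φf k t) ∂ρ := by
              refine integral_mono_of_nonneg ?_ hrhs_int ?_
              · filter_upwards with t
                exact mul_nonneg (Real.rpow_nonneg (abs_nonneg _) _) (hφf_nn k t)
              · filter_upwards [ae_restrict_mem measurableSet_Icc] with t ht
                exact hmono t ht
          _ = (2*L/n) ^ p * (F k + |(n:ℝ)*x - (k:ℝ)| ^ p * D k) := by
              rw [integral_const_mul, integral_add (hF_int k) ((hφf_int k).const_mul _),
                integral_const_mul]
      calc |N k / D k - g x| ^ p
          ≤ ((∫ t in Icc (0:ℝ) 1, |g t - g x| * φf k t ∂ρ) / D k) ^ p :=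
            Real.rpow_le_rpow (abs_nonneg _) habs2 hp0.le
        _ ≤ (∫ t in Icc (0:ℝ) 1, |g t - g x| ^ p * φf k t ∂ρ) / D k := hjen
        _ ≤ ((2*L/n) ^ p * (F k + |(n:ℝ)*x - (k:ℝ)| ^ p * D k)) / D k := by gcongr
        _ = (2*L/n) ^ p * (F k / D k + |(n:ℝ)*x - (k:ℝ)| ^ p) := by
            field_simp
    -- assemble
    calc |nnOp ρ σ g n x - g x| ^ p
        ≤ (∑ k ∈ K, (φf k x / W) * |N k / D k - g x|) ^ p :=
          Real.rpow_le_rpow (abs_nonneg _) habs hp0.le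
      _ ≤ ∑ k ∈ K, (φf k x / W) * |N k / D k - g x| ^ p := hjensen
      _ ≤ ∑ k ∈ K, (φf k x / m) * ((2*L/n) ^ p * (F k / D k + |(n:ℝ)*x - (k:ℝ)| ^ p)) := by
          refine Finset.sum_le_sum fun k hk => ?_
          exact mul_le_mul (div_le_div_of_nonneg_left (hφf_nn k x) hφ1pos hmW)
            (hcoeff k hk) (Real.rpow_nonneg (abs_nonneg _) _)
            (div_nonneg (hφf_nn k x) hφ1pos.le)
      _ = ∑ k ∈ K, (1/m) * ((2*L/n) ^ p) * ((F k / D k) * φf k x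
            + |(n:ℝ)*x - (k:ℝ)| ^ p * φf k x) := by
          refine Finset.sum_congr rfl fun k hk => ?_
          field_simp
      _ = (1/m) * ((2*L/n) ^ p) * ((∑ k ∈ K, (F k / D k) * φf k x)
            + ∑ k ∈ K, |(n:ℝ)*x - (k:ℝ)| ^ p * φf k x) := by
          rw [← Finset.mul_sum, Finset.sum_add_distrib]
      _ ≤ (1/m) * ((2*L/n) ^ p) * ((∑ k ∈ K, (F k / D k) * φf k x) + Mr) := by
          have h1 : ∑ k ∈ K, |(n:ℝ)*x - (k:ℝ)| ^ p * φf k x ≤ Mr := by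
            refine le_trans (Finset.sum_le_sum_of_subset_of_nonneg
              (hKdef ▸ Finset.filter_subset _ _) ?_) (hMom x)
            intro k _ _
            exact mul_nonneg (Real.rpow_nonneg (abs_nonneg _) _) (hφf_nn k x)
          have hc0 : (0:ℝ) ≤ (1/m) * ((2*L/n) ^ p) :=
            mul_nonneg (le_of_lt (one_div_pos.2 hφ1pos)) h2Lnp
          exact mul_le_mul_of_nonneg_left (by linarith) hc0
  -- integrate the pointwise bound
  have hU_int : Integrable (fun x =>
      (1/m) * ((2*L/n) ^ p) * ((∑ k ∈ K, (F k / D k) * φf k x) + Mr)) μ :=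
    (((integrable_finset_sum K (fun k _ => (hφf_int k).const_mul (F k / D k))).add
      (integrable_const Mr))).const_mul _
  have hInt : ∫ x in Icc (0:ℝ) 1, |nnOp ρ σ g n x - g x| ^ p ∂ρ ≤ (2*L/n) ^ p * B := by
    have h1 : ∫ x in Icc (0:ℝ) 1, |nnOp ρ σ g n x - g x| ^ p ∂ρ ≤
        ∫ x in Icc (0:ℝ) 1,
          (1/m) * ((2*L/n) ^ p) * ((∑ k ∈ K, (F k / D k) * φf k x) + Mr) ∂ρ := by
      refine integral_mono_of_nonneg ?_ hU_int hkey
      filter_upwards with x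
      exact Real.rpow_nonneg (abs_nonneg _) _
    have h2 : ∫ x in Icc (0:ℝ) 1,
        (1/m) * ((2*L/n) ^ p) * ((∑ k ∈ K, (F k / D k) * φf k x) + Mr) ∂ρ =
        (1/m) * ((2*L/n) ^ p) * ((∑ k ∈ K, (F k / D k) * D k) + Mr * ρI) := by
      rw [integral_const_mul]
      congr 1
      rw [integral_add
        (integrable_finset_sum K (fun k _ => (hφf_int k).const_mul (F k / D k)))
        (integrable_const Mr), integral_finset_sum K
          (fun k _ => (hφf_int k).const_mul (F k / D k)), integral_const]
      congr 1
      · exact Finset.sum_congr rfl fun k hk => integral_const_mul _ _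
      · rw [hμdef, Measure.real, Measure.restrict_apply_univ]
        simp [hρIdef, smul_eq_mul, mul_comm]
    have h3 : (∑ k ∈ K, (F k / D k) * D k) ≤ Mr * ρI := by
      have e1 : ∀ k ∈ K, (F k / D k) * D k = F k := by
        intro k hk
        have hDk : 0 < D k := (Finset.mem_filter.1 hk).2
        field_simp
      rw [Finset.sum_congr rfl e1]
      calc ∑ k ∈ K, F k ≤ ∑ k ∈ Finset.range (n+1), F k :=
            Finset.sum_le_sum_of_subset_of_nonneg (hKdef ▸ Finset.filter_subset _ _)
              (fun k _ _ => hFnn k)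
        _ = ∫ x in Icc (0:ℝ) 1,
              ∑ k ∈ Finset.range (n+1), |(n:ℝ)*x - (k:ℝ)| ^ p * φf k x ∂ρ :=
            (integral_finset_sum _ (fun k _ => hF_int k)).symm
        _ ≤ ∫ x in Icc (0:ℝ) 1, Mr ∂ρ := by
            refine integral_mono_of_nonneg ?_ (integrable_const Mr) ?_
            · filter_upwards with x
              exact Finset.sum_nonneg fun k _ =>
                mul_nonneg (Real.rpow_nonneg (abs_nonneg _) _) (hφf_nn k x)
            · filter_upwards with x
              exact hMom x
        _ = Mr * ρI := by
            rw [integral_const, Measure.real, Measure.restrict_apply_univ]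
            simp [hρIdef, smul_eq_mul, mul_comm]
    calc ∫ x in Icc (0:ℝ) 1, |nnOp ρ σ g n x - g x| ^ p ∂ρ
        ≤ (1/m) * ((2*L/n) ^ p) * ((∑ k ∈ K, (F k / D k) * D k) + Mr * ρI) := by
          rw [← h2]; exact h1
      _ ≤ (1/m) * ((2*L/n) ^ p) * (Mr * ρI + Mr * ρI) := by
          have hc0 : (0:ℝ) ≤ (1/m) * ((2*L/n) ^ p) :=
            mul_nonneg (le_of_lt (one_div_pos.2 hφ1pos)) h2Lnp
          exact mul_le_mul_of_nonneg_left (by linarith) hc0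
      _ = (2*L/n) ^ p * (2 * (Mr * ρI) / m) := by ring
      _ ≤ (2*L/n) ^ p * B := by
          refine mul_le_mul_of_nonneg_left ?_ h2Lnp
          rw [hBdef]
          refine (div_le_div_iff_of_pos_right hφ1pos).2 ?_
          nlinarith
  -- take p-th roots
  have hLp : LpNorm1 ρ p (fun x => nnOp ρ σ g n x - g x) =
      (∫ x in Icc (0:ℝ) 1, |nnOp ρ σ g n x - g x| ^ p ∂ρ) ^ (1/p) := rfl
  rw [hLp]
  have hIntNN : 0 ≤ ∫ x in Icc (0:ℝ) 1, |nnOp ρ σ g n x - g x| ^ p ∂ρ :=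
    integral_nonneg fun x => Real.rpow_nonneg (abs_nonneg _) _
  calc (∫ x in Icc (0:ℝ) 1, |nnOp ρ σ g n x - g x| ^ p ∂ρ) ^ (1/p)
      ≤ ((2*L/n) ^ p * B) ^ (1/p) := Real.rpow_le_rpow hIntNN hInt (by positivity)
    _ = (2*L/n) * B ^ (1/p) := by
        rw [Real.mul_rpow h2Lnp hB0.le, ← Real.rpow_mul h2Ln,
          mul_one_div_cancel hp0.ne', Real.rpow_one]
    _ = 2 * B ^ (1/p) * L / n := by ring
end
end

section
/- Let σ(x) = 1/(1 + e^{−x}) be the logistic function and φ_σ(x) = (σ(x+1) − σ(x−1))/2. Then for every 1 ≤ p < ∞, the p-th discrete absolute moment M_p(φ_σ) = sup_{x∈ℝ} ∑_{k∈ℤ} |x−k|^p φ_σ(x−k) is finite. -/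
open MeasureTheory Set Filter Topology

noncomputable section

section Aux

private lemma logistic_le_exp (t : ℝ) : 1 / (1 + Real.exp (-t)) ≤ Real.exp t := by
  have h1 : (0:ℝ) < 1 + Real.exp (-t) := by positivity
  rw [div_le_iff₀ h1]
  have : Real.exp t * Real.exp (-t) = 1 := by
    rw [← Real.exp_add]; simp
  nlinarith [Real.exp_pos t]

private lemma one_sub_logistic_le_exp (t : ℝ) :
    1 - 1 / (1 + Real.exp (-t)) ≤ Real.exp (-t) := by
  have h1 : (0:ℝ) < 1 + Real.exp (-t) := by positivity
  have key : 1 - 1 / (1 + Real.exp (-t)) = Real.exp (-t) / (1 + Real.exp (-t)) := by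
    field_simp
    ring
  rw [key]
  exact div_le_self (Real.exp_pos _).le (by nlinarith [Real.exp_pos (-t)])

private lemma logistic_nonneg (t : ℝ) : 0 ≤ 1 / (1 + Real.exp (-t)) := by positivity

private lemma logistic_le_one (t : ℝ) : 1 / (1 + Real.exp (-t)) ≤ 1 := by
  rw [div_le_one (by positivity)]
  nlinarith [Real.exp_pos (-t)]

private lemma logistic_mono : Monotone (fun t : ℝ => 1 / (1 + Real.exp (-t))) := by
  intro a b hab
  have ha : (0:ℝ) < 1 + Real.exp (-a) := by positivity
  have hb : (0:ℝ) < 1 + Real.exp (-b) := by positivity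
  have := Real.exp_le_exp.2 (neg_le_neg hab)
  exact one_div_le_one_div_of_le hb (by linarith)

private lemma phiK_nonneg (σ : ℝ → ℝ) (hσ : σ = fun x => 1 / (1 + Real.exp (-x)))
    (y : ℝ) : 0 ≤ phiK σ y := by
  subst hσ
  have := logistic_mono (show y - 1 ≤ y + 1 by linarith)
  simp only [phiK]
  linarith

private lemma phiK_le (σ : ℝ → ℝ) (hσ : σ = fun x => 1 / (1 + Real.exp (-x)))
    (y : ℝ) : phiK σ y ≤ Real.exp (1 - |y|) := by
  subst hσ
  simp only [phiK]
  rcases le_or_gt 0 y with hy | hy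
  · rw [abs_of_nonneg hy]
    have h1 : (1:ℝ) / (1 + Real.exp (-(y + 1))) ≤ 1 := logistic_le_one _
    have h2 : 1 - 1 / (1 + Real.exp (-(y - 1))) ≤ Real.exp (-(y - 1)) :=
      one_sub_logistic_le_exp _
    have : Real.exp (-(y - 1)) = Real.exp (1 - y) := by ring_nf
    linarith [Real.exp_pos (1 - y)]
  · rw [abs_of_neg hy]
    have h1 : (1:ℝ) / (1 + Real.exp (-(y + 1))) ≤ Real.exp (y + 1) := logistic_le_exp _
    have h2 : 0 ≤ 1 / (1 + Real.exp (-(y - 1))) := logistic_nonneg _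
    have : Real.exp (y + 1) = Real.exp (1 - -y) := by ring_nf
    linarith [Real.exp_pos (y + 1)]

/-- The comparison series, as a function of `k : ℤ`. -/
private lemma summable_comparison (p : ℝ) (hp : 1 ≤ p) :
    Summable (fun k : ℤ => (|(k : ℝ)| + 1) ^ p * Real.exp (-|(k : ℝ)|)) := by
  -- reduce to a ℕ-indexed series
  set m : ℕ := ⌈p⌉₊ with hm
  have hpm : p ≤ (m : ℝ) := Nat.le_ceil p
  have hr : ‖Real.exp (-1)‖ < 1 := by
    rw [Real.norm_eq_abs, abs_of_pos (Real.exp_pos _)]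
    exact Real.exp_lt_one_iff.2 (by norm_num)
  -- Summable (fun n : ℕ => ((n:ℝ)+1)^m * exp(-1)^n)
  have hs0 : Summable (fun n : ℕ => (n : ℝ) ^ m * Real.exp (-1) ^ n) :=
    summable_pow_mul_geometric_of_norm_lt_one m hr
  have hs1 : Summable (fun n : ℕ => ((n : ℝ) + 1) ^ m * Real.exp (-1) ^ (n + 1)) := by
    have := (summable_nat_add_iff 1).2 hs0
    simpa using this
  have hs2 : Summable (fun n : ℕ => ((n : ℝ) + 1) ^ m * Real.exp (-1) ^ n) := by
    have hne : Real.exp (-1) ≠ 0 := (Real.exp_pos _).ne'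
    have := hs1.mul_left (Real.exp (-1))⁻¹
    refine this.congr fun n => ?_
    field_simp
    ring
  -- the natural-index comparison
  have key : ∀ n : ℕ, ((n : ℝ) + 1) ^ p * Real.exp (-(n : ℝ)) ≤
      ((n : ℝ) + 1) ^ m * Real.exp (-1) ^ n := by
    intro n
    have h1 : ((n : ℝ) + 1) ^ p ≤ ((n : ℝ) + 1) ^ (m : ℝ) :=
      Real.rpow_le_rpow_of_exponent_le (le_add_of_nonneg_left (Nat.cast_nonneg n)) hpm
    have h2 : ((n : ℝ) + 1) ^ (m : ℝ) = ((n : ℝ) + 1) ^ m := Real.rpow_natCast _ m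
    have h3 : Real.exp (-(n : ℝ)) = Real.exp (-1) ^ n := by
      rw [← Real.exp_nat_mul]; ring_nf
    rw [h3]
    apply mul_le_mul_of_nonneg_right _ (by positivity)
    rw [← h2]; exact h1
  have hnat : Summable (fun n : ℕ => ((n : ℝ) + 1) ^ p * Real.exp (-(n : ℝ))) := by
    apply Summable.of_nonneg_of_le (fun n => by positivity) key hs2
  apply Summable.of_nat_of_neg_add_one
  · refine hnat.congr fun n => ?_
    have : |((n : ℤ) : ℝ)| = (n : ℝ) := by
      push_cast
      exact abs_of_nonneg (Nat.cast_nonneg n)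
    rw [this]
  · refine (((summable_nat_add_iff 1).2 hnat).congr fun n => ?_)
    have : |((-((n : ℤ) + 1) : ℤ) : ℝ)| = (n : ℝ) + 1 := by
      push_cast
      rw [abs_neg, abs_of_nonneg (by positivity)]
    push_cast
    rw [show |(-((n:ℝ)+1))| = (n:ℝ)+1 by rw [abs_neg, abs_of_nonneg (by positivity)]]

end Aux

/-- for the logistic function `σ(x) = 1/(1 + e^{−x})`, the `p`-th discrete
absolute moment `M_p(φ_σ) = sup_{x∈ℝ} ∑_{k∈ℤ} |x−k|^p φ_σ(x−k)` is finite for `1 ≤ p < ∞`. -/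
theorem statement16 (σ : ℝ → ℝ) (hσ : σ = fun x => 1 / (1 + Real.exp (-x)))
    (p : ℝ) (hp : 1 ≤ p) :
    MomentFin σ p := by
  have hp0 : 0 ≤ p := by linarith
  -- the comparison constant
  set C : ENNReal := ∑' k : ℤ,
      ENNReal.ofReal (Real.exp 2 * ((|(k : ℝ)| + 1) ^ p * Real.exp (-|(k : ℝ)|))) with hC
  have hCfin : C < ⊤ := by
    have hsum := (summable_comparison p hp).mul_left (Real.exp 2)
    rw [hC, ← ENNReal.ofReal_tsum_of_nonneg (fun k => by positivity) hsum]
    exact ENNReal.ofReal_lt_top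
  rw [MomentFin]
  refine lt_of_le_of_lt (iSup_le fun x => ?_) hCfin
  -- reindex by the floor of x
  set n : ℤ := ⌊x⌋ with hn
  set t : ℝ := Int.fract x with ht
  have ht0 : 0 ≤ t := Int.fract_nonneg x
  have ht1 : t < 1 := Int.fract_lt_one x
  have hre : (∑' k : ℤ, ENNReal.ofReal (|x - (k : ℝ)| ^ p * phiK σ (x - (k : ℝ))))
      = ∑' k : ℤ, ENNReal.ofReal (|t - (k : ℝ)| ^ p * phiK σ (t - (k : ℝ))) := by
    rw [← (Equiv.addRight n).tsum_eq
      (fun k : ℤ => ENNReal.ofReal (|x - (k : ℝ)| ^ p * phiK σ (x - (k : ℝ))))]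
    refine tsum_congr fun k => ?_
    have : x - ((Equiv.addRight n) k : ℤ) = t - (k : ℝ) := by
      simp only [Equiv.coe_addRight, ht, Int.fract]
      push_cast
      ring
    rw [this]
  rw [hre]
  refine ENNReal.tsum_le_tsum fun k => ?_
  apply ENNReal.ofReal_le_ofReal
  -- bounds
  have habs1 : |t - (k : ℝ)| ≤ |(k : ℝ)| + 1 := by
    have := abs_sub (t) ((k : ℝ))
    have h : |t| ≤ 1 := by rw [abs_of_nonneg ht0]; linarith
    calc |t - (k : ℝ)| ≤ |t| + |(k : ℝ)| := abs_sub _ _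
      _ ≤ |(k : ℝ)| + 1 := by linarith
  have habs2 : |(k : ℝ)| - 1 ≤ |t - (k : ℝ)| := by
    have h : |t| ≤ 1 := by rw [abs_of_nonneg ht0]; linarith
    have : |(k : ℝ)| ≤ |t - (k : ℝ)| + |t| := by
      have := abs_add_le (t - (k : ℝ)) (-t)
      simp at this
      calc |(k : ℝ)| = |t - (k : ℝ) - t| := by rw [show t - (k : ℝ) - t = -(k:ℝ) by ring, abs_neg]
        _ ≤ |t - (k : ℝ)| + |t| := abs_sub _ _
    linarith
  have h1 : |t - (k : ℝ)| ^ p ≤ (|(k : ℝ)| + 1) ^ p :=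
    Real.rpow_le_rpow (abs_nonneg _) habs1 hp0
  have h2 : phiK σ (t - (k : ℝ)) ≤ Real.exp 2 * Real.exp (-|(k : ℝ)|) := by
    calc phiK σ (t - (k : ℝ)) ≤ Real.exp (1 - |t - (k : ℝ)|) := phiK_le σ hσ _
      _ ≤ Real.exp (2 - |(k : ℝ)|) := Real.exp_le_exp.2 (by linarith)
      _ = Real.exp 2 * Real.exp (-|(k : ℝ)|) := by rw [← Real.exp_add]; ring_nf
  calc |t - (k : ℝ)| ^ p * phiK σ (t - (k : ℝ))
      ≤ (|(k : ℝ)| + 1) ^ p * (Real.exp 2 * Real.exp (-|(k : ℝ)|)) := by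
        apply mul_le_mul h1 h2 (phiK_nonneg σ hσ _) (by positivity)
    _ = Real.exp 2 * ((|(k : ℝ)| + 1) ^ p * Real.exp (-|(k : ℝ)|)) := by ring
end
end

section
/- Let σ(x) = (e^x − e^{−x})/(e^x + e^{−x}) = tanh(x) and φ_σ(x) = (σ(x+1) − σ(x−1))/2. Then for every δ ∈ (0,1), the ratio [σ(nδ+1) − σ(nδ−1)] / [σ(nδ²+1) − σ(nδ²−1)] = φ_σ(nδ)/φ_σ(nδ²) tends to 0 as n → ∞; equivalently, max{φ_σ(nt−k): t ∈ [0,1]\(k/n−δ, k/n+δ)} / min{φ_σ(nt−k): t ∈ (k/n, k/n+δ²)} → 0 as n → ∞. -/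
open MeasureTheory Set Filter Topology

noncomputable section

theorem phiK_eq (σ : ℝ → ℝ)
    (hσ : σ = fun x => (Real.exp x - Real.exp (-x)) / (Real.exp x + Real.exp (-x)))
    (x : ℝ) : phiK σ x = Real.sinh 2 / (Real.cosh (2*x) + Real.cosh 2) := by
  have e1 : ∀ y : ℝ, Real.exp y + Real.exp (-y) > 0 := fun y =>
    add_pos (Real.exp_pos y) (Real.exp_pos (-y))
  have hden : Real.cosh (2*x) + Real.cosh 2 > 0 :=
    add_pos (Real.cosh_pos _) (Real.cosh_pos _)
  simp only [phiK, hσ, Real.sinh_eq, Real.cosh_eq]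
  rw [div_sub_div _ _ (e1 (x+1)).ne' (e1 (x-1)).ne']
  rw [div_div, div_eq_div_iff (by positivity) (by positivity)]
  have h2 : (2:ℝ) = 1 + 1 := by norm_num
  have hx2 : 2*x = x + x := by ring
  rw [hx2, h2]
  simp only [Real.exp_add, Real.exp_neg, Real.exp_sub, neg_add, neg_sub, sub_eq_add_neg]
  have hx := (Real.exp_pos x).ne'
  have h1 := (Real.exp_pos 1).ne'
  field_simp
  ring

lemma sinh_two_pos : 0 < Real.sinh 2 := Real.sinh_pos_iff.2 (by norm_num)

lemma phiK_pos (σ : ℝ → ℝ)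
    (hσ : σ = fun x => (Real.exp x - Real.exp (-x)) / (Real.exp x + Real.exp (-x)))
    (x : ℝ) : 0 < phiK σ x := by
  rw [phiK_eq σ hσ]
  exact div_pos sinh_two_pos (add_pos (Real.cosh_pos _) (Real.cosh_pos _))

lemma phiK_mono (σ : ℝ → ℝ)
    (hσ : σ = fun x => (Real.exp x - Real.exp (-x)) / (Real.exp x + Real.exp (-x)))
    {a b : ℝ} (h : |a| ≤ |b|) : phiK σ b ≤ phiK σ a := by
  rw [phiK_eq σ hσ, phiK_eq σ hσ]
  have hc : Real.cosh (2*a) ≤ Real.cosh (2*b) := by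
    rw [Real.cosh_le_cosh, abs_mul, abs_mul]
    exact mul_le_mul_of_nonneg_left h (by norm_num)
  gcongr

lemma phiK_ratio (σ : ℝ → ℝ)
    (hσ : σ = fun x => (Real.exp x - Real.exp (-x)) / (Real.exp x + Real.exp (-x)))
    (a b : ℝ) : phiK σ a / phiK σ b
      = (Real.cosh (2*b) + Real.cosh 2) / (Real.cosh (2*a) + Real.cosh 2) := by
  rw [phiK_eq σ hσ, phiK_eq σ hσ, div_div_div_comm, div_self sinh_two_pos.ne', one_div, inv_div]

lemma cosh_le_exp' {x : ℝ} (hx : 0 ≤ x) : Real.cosh x ≤ Real.exp x := by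
  rw [Real.cosh_eq]
  have : Real.exp (-x) ≤ Real.exp x := Real.exp_le_exp.2 (by linarith)
  linarith

lemma half_exp_le_cosh (x : ℝ) : Real.exp x / 2 ≤ Real.cosh x := by
  rw [Real.cosh_eq]
  have := (Real.exp_pos (-x)).le
  linarith

lemma ratio_tendsto {δ : ℝ} (h0 : 0 < δ) (h1 : δ < 1) :
    Tendsto (fun n : ℕ =>
      (Real.cosh (2*((n:ℝ)*δ^2)) + Real.cosh 2) / (Real.cosh (2*((n:ℝ)*δ)) + Real.cosh 2))
      atTop (nhds 0) := by
  set c : ℝ := Real.exp (2*δ^2 - 2*δ) with hc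
  have hc1 : c < 1 := Real.exp_lt_one_iff.2 (by nlinarith)
  have hc0 : 0 ≤ c := (Real.exp_pos _).le
  have hg : Tendsto (fun n : ℕ => 4 * c ^ n) atTop (nhds 0) := by
    have := (tendsto_pow_atTop_nhds_zero_of_lt_one hc0 hc1).const_mul 4
    simpa using this
  apply squeeze_zero' _ _ hg
  · filter_upwards with n
    have h2 : (0:ℝ) < Real.cosh (2*((n:ℝ)*δ)) + Real.cosh 2 :=
      add_pos (Real.cosh_pos _) (Real.cosh_pos _)
    positivity
  · have hev : ∀ᶠ n : ℕ in atTop, (1:ℝ)/δ^2 ≤ (n:ℝ) :=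
      tendsto_natCast_atTop_atTop.eventually_ge_atTop _
    filter_upwards [hev] with n hn
    have hn0 : (0:ℝ) ≤ (n:ℝ) := Nat.cast_nonneg n
    have hnd : (1:ℝ) ≤ (n:ℝ) * δ^2 := by
      rw [div_le_iff₀ (by positivity)] at hn
      linarith [hn]
    have hnum : Real.cosh (2*((n:ℝ)*δ^2)) + Real.cosh 2 ≤ 2 * Real.exp (2*((n:ℝ)*δ^2)) := by
      have hb : Real.cosh 2 ≤ Real.cosh (2*((n:ℝ)*δ^2)) := by
        rw [Real.cosh_le_cosh]
        rw [abs_of_nonneg (by norm_num), abs_of_nonneg (by positivity)]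
        nlinarith
      have := cosh_le_exp' (x := 2*((n:ℝ)*δ^2)) (by positivity)
      linarith
    have hden : Real.exp (2*((n:ℝ)*δ)) / 2 ≤ Real.cosh (2*((n:ℝ)*δ)) + Real.cosh 2 := by
      have := half_exp_le_cosh (2*((n:ℝ)*δ))
      have := (Real.cosh_pos 2).le
      linarith
    have hdp : (0:ℝ) < Real.exp (2*((n:ℝ)*δ)) / 2 := by positivity
    calc (Real.cosh (2*((n:ℝ)*δ^2)) + Real.cosh 2) / (Real.cosh (2*((n:ℝ)*δ)) + Real.cosh 2)
        ≤ (2 * Real.exp (2*((n:ℝ)*δ^2))) / (Real.exp (2*((n:ℝ)*δ)) / 2) := by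
          apply div_le_div₀ (by positivity) hnum hdp hden
      _ = 4 * c ^ n := by
          rw [hc, ← Real.exp_nat_mul]
          rw [div_div_eq_mul_div, div_eq_iff (Real.exp_pos _).ne', mul_assoc (4:ℝ),
            ← Real.exp_add]
          have : (n:ℝ) * (2*δ^2 - 2*δ) + 2*((n:ℝ)*δ) = 2*((n:ℝ)*δ^2) := by ring
          rw [this]
          ring

/-- `max{φ_σ(nt−k) : t ∈ [0,1] \ (k/n−δ, k/n+δ)} / min{φ_σ(nt−k) : t ∈ (k/n, k/n+δ²)}`. -/
def KernelRatio (σ : ℝ → ℝ) (n k : ℕ) (δ : ℝ) : ℝ :=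
  sSup ((fun t => phiK σ ((n : ℝ) * t - (k : ℝ))) ''
      (Icc (0:ℝ) 1 \ Ioo ((k : ℝ) / n - δ) ((k : ℝ) / n + δ))) /
    sInf ((fun t => phiK σ ((n : ℝ) * t - (k : ℝ))) ''
      (Ioo ((k : ℝ) / n) ((k : ℝ) / n + δ ^ 2)))

/-- For every `δ ∈ (0,1)`, the max/min kernel ratio tends to `0` as `n → ∞`,
uniformly in `k ∈ {0,…,n}`. -/
def RatioCond (σ : ℝ → ℝ) : Prop :=
  ∀ δ ∈ Ioo (0:ℝ) 1, ∀ ε > (0:ℝ), ∃ N : ℕ, ∀ n ≥ N, ∀ k ≤ n, KernelRatio σ n k δ < ε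

/-- for the hyperbolic tangent `σ(x) = (eˣ − e⁻ˣ)/(eˣ + e⁻ˣ)` and every
`δ ∈ (0,1)`, `φ_σ(nδ)/φ_σ(nδ²) = [σ(nδ+1) − σ(nδ−1)]/[σ(nδ²+1) − σ(nδ²−1)] → 0`
as `n → ∞`; equivalently, the max/min kernel ratio tends to `0`. -/
theorem statement17 (σ : ℝ → ℝ)
    (hσ : σ = fun x => (Real.exp x - Real.exp (-x)) / (Real.exp x + Real.exp (-x))) :
    (∀ δ ∈ Ioo (0:ℝ) 1,
      Tendsto (fun n : ℕ =>
        phiK σ ((n : ℝ) * δ) / phiK σ ((n : ℝ) * δ ^ 2)) atTop (nhds 0)) ∧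
    RatioCond σ := by
  have part1 : ∀ δ ∈ Ioo (0:ℝ) 1,
      Tendsto (fun n : ℕ =>
        phiK σ ((n : ℝ) * δ) / phiK σ ((n : ℝ) * δ ^ 2)) atTop (nhds 0) := by
    intro δ hδ
    simpa only [phiK_ratio σ hσ] using ratio_tendsto hδ.1 hδ.2
  refine ⟨part1, ?_⟩
  intro δ hδ ε hε
  obtain ⟨h0, h1⟩ := hδ
  obtain ⟨N0, hN0⟩ := eventually_atTop.1 ((part1 δ ⟨h0, h1⟩).eventually (gt_mem_nhds hε))
  refine ⟨max N0 1, fun n hn k hk => ?_⟩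
  have hn1 : 1 ≤ n := le_trans (le_max_right _ _) hn
  have hnR : (0:ℝ) < (n:ℝ) := by exact_mod_cast hn1
  have hnR' : (n:ℝ) ≠ 0 := hnR.ne'
  have hkn : (n:ℝ) * ((k:ℝ)/(n:ℝ)) = (k:ℝ) := by field_simp
  -- numerator bound
  have hsup : sSup ((fun t => phiK σ ((n : ℝ) * t - (k : ℝ))) ''
      (Icc (0:ℝ) 1 \ Ioo ((k : ℝ) / n - δ) ((k : ℝ) / n + δ))) ≤ phiK σ ((n:ℝ)*δ) := by
    apply Real.sSup_le
    · rintro x ⟨t, ⟨htI, htN⟩, rfl⟩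
      apply phiK_mono σ hσ
      rw [abs_of_nonneg (by positivity : (0:ℝ) ≤ (n:ℝ)*δ)]
      rw [mem_Ioo, not_and_or, not_lt, not_lt] at htN
      rcases htN with h | h
      · refine le_abs.2 (Or.inr ?_)
        have : (n:ℝ) * t ≤ (n:ℝ) * ((k:ℝ)/n - δ) := by
          exact mul_le_mul_of_nonneg_left h hnR.le
        rw [mul_sub, hkn] at this
        linarith
      · refine le_abs.2 (Or.inl ?_)
        have : (n:ℝ) * ((k:ℝ)/n + δ) ≤ (n:ℝ) * t := by
          exact mul_le_mul_of_nonneg_left h hnR.le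
        rw [mul_add, hkn] at this
        linarith
    · exact (phiK_pos σ hσ _).le
  -- denominator bound
  have hinf : phiK σ ((n:ℝ)*δ^2) ≤ sInf ((fun t => phiK σ ((n : ℝ) * t - (k : ℝ))) ''
      (Ioo ((k : ℝ) / n) ((k : ℝ) / n + δ ^ 2))) := by
    apply le_csInf
    · refine ⟨_, mem_image_of_mem _ (?_ : (k:ℝ)/n + δ^2/2 ∈ Ioo ((k:ℝ)/n) ((k:ℝ)/n + δ^2))⟩
      constructor <;> nlinarith
    · rintro b ⟨t, ⟨ht1, ht2⟩, rfl⟩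
      apply phiK_mono σ hσ
      have hlo : (0:ℝ) < (n:ℝ)*t - k := by
        have := mul_lt_mul_of_pos_left ht1 hnR
        rw [hkn] at this
        linarith
      have hhi : (n:ℝ)*t - k ≤ (n:ℝ)*δ^2 := by
        have := mul_lt_mul_of_pos_left ht2 hnR
        rw [mul_add, hkn] at this
        linarith
      rw [abs_of_pos hlo, abs_of_nonneg (by positivity : (0:ℝ) ≤ (n:ℝ)*δ^2)]
      exact hhi
  have hbp : 0 < phiK σ ((n:ℝ)*δ^2) := phiK_pos σ hσ _
  have hmain : KernelRatio σ n k δ ≤ phiK σ ((n:ℝ)*δ) / phiK σ ((n:ℝ)*δ^2) := by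
    unfold KernelRatio
    exact div_le_div₀ (phiK_pos σ hσ _).le hsup hbp hinf
  exact lt_of_le_of_lt hmain (hN0 n (le_trans (le_max_left _ _) hn))
end
end

section
/- Let σ(x) = tanh(x) and φ_σ(x) = (σ(x+1) − σ(x−1))/2 = (1/2)(tanh(x+1) − tanh(x−1)). Then for every 1 ≤ p < ∞, the p-th discrete absolute moment M_p(φ_σ) = sup_{x∈ℝ} ∑_{k∈ℤ} |x−k|^p φ_σ(x−k) is finite. -/
open MeasureTheory Set Filter Topology

noncomputable section

lemma my_tanh_le_one (t : ℝ) : Real.tanh t ≤ 1 := by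
  rw [Real.tanh_eq_sinh_div_cosh, Real.sinh_eq, Real.cosh_eq]
  have hb : 0 < Real.exp (-t) := Real.exp_pos _
  have hc : 0 < (Real.exp t + Real.exp (-t)) / 2 := by positivity
  rw [div_le_one hc]
  linarith

lemma my_one_sub_tanh (t : ℝ) : 1 - Real.tanh t ≤ 2 * Real.exp (-(2 * t)) := by
  have ha : 0 < Real.exp t := Real.exp_pos t
  have hb : 0 < Real.exp (-t) := Real.exp_pos _
  have hab : Real.exp t * Real.exp (-t) = 1 := by
    rw [← Real.exp_add]; simp
  have h2 : Real.exp (-(2 * t)) = Real.exp (-t) * Real.exp (-t) := by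
    rw [← Real.exp_add]; ring_nf
  rw [Real.tanh_eq_sinh_div_cosh, Real.sinh_eq, Real.cosh_eq, h2]
  have hc : 0 < (Real.exp t + Real.exp (-t)) / 2 := by positivity
  have key : (1 - 2 * (Real.exp (-t) * Real.exp (-t))) * ((Real.exp t + Real.exp (-t)) / 2)
      ≤ (Real.exp t - Real.exp (-t)) / 2 := by nlinarith
  have := (le_div_iff₀ hc).mpr key
  linarith

lemma my_phi_bound (y : ℝ) : phiK Real.tanh y ≤ Real.exp (2 - 2 * |y|) := by
  unfold phiK
  rcases le_or_gt 0 y with h | h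
  · rw [abs_of_nonneg h]
    have h1 := my_tanh_le_one (y + 1)
    have h2 := my_one_sub_tanh (y - 1)
    have he : Real.exp (-(2 * (y - 1))) = Real.exp (2 - 2 * y) := by ring_nf
    rw [he] at h2
    linarith
  · rw [abs_of_neg h]
    have h1 : -Real.tanh (y - 1) ≤ 1 := by
      rw [← Real.tanh_neg]; exact my_tanh_le_one _
    have h2 := my_one_sub_tanh (-(y + 1))
    rw [Real.tanh_neg] at h2
    have he : Real.exp (-(2 * -(y + 1))) = Real.exp (2 - 2 * -y) := by ring_nf
    rw [he] at h2
    linarith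

lemma my_rpow_le_exp (p t : ℝ) (hp : 1 ≤ p) (ht : 0 ≤ t) :
    t ^ p ≤ p ^ p * Real.exp t := by
  have hp0 : 0 < p := lt_of_lt_of_le one_pos hp
  have h2 : (t / p) ^ p ≤ Real.exp t := by
    have h3 : t / p ≤ Real.exp (t / p) := by
      have := Real.add_one_le_exp (t / p); linarith
    calc (t / p) ^ p ≤ (Real.exp (t / p)) ^ p :=
          Real.rpow_le_rpow (by positivity) h3 hp0.le
      _ = Real.exp t := by
          rw [← Real.exp_mul, div_mul_cancel₀ _ hp0.ne']
  calc t ^ p = (p * (t / p)) ^ p := by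
        rw [mul_div_cancel₀ _ hp0.ne']
    _ = p ^ p * (t / p) ^ p := Real.mul_rpow hp0.le (by positivity)
    _ ≤ p ^ p * Real.exp t :=
        mul_le_mul_of_nonneg_left h2 (Real.rpow_nonneg hp0.le p)

/-- for `σ = tanh`, so `φ_σ(x) = (tanh(x+1) − tanh(x−1))/2`, the `p`-th
discrete absolute moment `M_p(φ_σ)` is finite for every `1 ≤ p < ∞`. -/
theorem statement18 (σ : ℝ → ℝ) (hσ : σ = Real.tanh)
    (p : ℝ) (hp : 1 ≤ p) :
    MomentFin σ p := by
  subst hσ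
  unfold MomentFin
  have hp0 : (0 : ℝ) < p := lt_of_lt_of_le one_pos hp
  set C : ℝ := p ^ p * Real.exp 3 with hC
  have hC0 : 0 ≤ C := mul_nonneg (Real.rpow_nonneg hp0.le p) (Real.exp_pos 3).le
  -- the dominating constant series
  have hsumR : Summable (fun j : ℤ => C * Real.exp (-|(j : ℝ)|)) := by
    apply Summable.mul_left
    apply Summable.of_nat_of_neg (f := fun j : ℤ => Real.exp (-|(j : ℝ)|))
    · have : (fun n : ℕ => Real.exp (-|((n : ℤ) : ℝ)|)) =
          fun n : ℕ => Real.exp (-1) ^ n := by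
        funext n
        rw [← Real.exp_nat_mul]
        congr 1
        push_cast
        rw [abs_of_nonneg (by positivity : (0:ℝ) ≤ (n:ℝ))]
        ring
      rw [this]
      exact summable_geometric_of_lt_one (Real.exp_pos _).le
        (Real.exp_lt_one_iff.mpr (by norm_num))
    · have : (fun n : ℕ => Real.exp (-|((-n : ℤ) : ℝ)|)) =
          fun n : ℕ => Real.exp (-1) ^ n := by
        funext n
        rw [← Real.exp_nat_mul]
        congr 1
        push_cast
        rw [abs_neg, abs_of_nonneg (by positivity : (0:ℝ) ≤ (n:ℝ))]
        ring
      rw [this]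
      exact summable_geometric_of_lt_one (Real.exp_pos _).le
        (Real.exp_lt_one_iff.mpr (by norm_num))
  have key : ∀ x : ℝ,
      (∑' k : ℤ, ENNReal.ofReal (|x - (k : ℝ)| ^ p * phiK Real.tanh (x - (k : ℝ))))
        ≤ ∑' j : ℤ, ENNReal.ofReal (C * Real.exp (-|(j : ℝ)|)) := by
    intro x
    set n : ℤ := round x with hn
    have step1 : (∑' k : ℤ, ENNReal.ofReal (|x - (k : ℝ)| ^ p * phiK Real.tanh (x - (k : ℝ))))
        ≤ ∑' k : ℤ, ENNReal.ofReal (C * Real.exp (-|(((n - k : ℤ)) : ℝ)|)) := by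
      apply ENNReal.tsum_le_tsum
      intro k
      apply ENNReal.ofReal_le_ofReal
      set y : ℝ := x - (k : ℝ) with hy
      have hy0 : 0 ≤ |y| := abs_nonneg _
      have e1 : |y| ^ p * phiK Real.tanh y ≤ |y| ^ p * Real.exp (2 - 2 * |y|) :=
        mul_le_mul_of_nonneg_left (my_phi_bound y) (Real.rpow_nonneg hy0 p)
      have e2 : |y| ^ p * Real.exp (2 - 2 * |y|)
          ≤ (p ^ p * Real.exp |y|) * Real.exp (2 - 2 * |y|) :=
        mul_le_mul_of_nonneg_right (my_rpow_le_exp p _ hp hy0) (Real.exp_pos _).le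
      have e3 : (p ^ p * Real.exp |y|) * Real.exp (2 - 2 * |y|)
          = p ^ p * Real.exp (2 - |y|) := by
        rw [mul_assoc, ← Real.exp_add]; ring_nf
      have hr : |x - (n : ℝ)| ≤ 1 / 2 := by
        rw [hn]; exact abs_sub_round x
      have htri : |(n : ℝ) - (k : ℝ)| ≤ |(n : ℝ) - x| + |x - (k : ℝ)| := abs_sub_le _ _ _
      have hcast : |(((n - k : ℤ)) : ℝ)| = |(n : ℝ) - (k : ℝ)| := by push_cast; rfl
      have e4 : Real.exp (2 - |y|) ≤ Real.exp (3 + -|(((n - k : ℤ)) : ℝ)|) := by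
        apply Real.exp_le_exp.mpr
        rw [hcast]
        have h5 : |(n : ℝ) - x| = |x - (n : ℝ)| := abs_sub_comm _ _
        rw [hy]
        linarith
      have e5 : p ^ p * Real.exp (3 + -|(((n - k : ℤ)) : ℝ)|)
          = C * Real.exp (-|(((n - k : ℤ)) : ℝ)|) := by
        rw [Real.exp_add, hC]; ring
      calc |y| ^ p * phiK Real.tanh y ≤ p ^ p * Real.exp (2 - |y|) := by
            rw [← e3]; exact e1.trans e2
        _ ≤ p ^ p * Real.exp (3 + -|(((n - k : ℤ)) : ℝ)|) :=
            mul_le_mul_of_nonneg_left e4 (Real.rpow_nonneg hp0.le p)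
        _ = C * Real.exp (-|(((n - k : ℤ)) : ℝ)|) := e5
    have step2 : (∑' k : ℤ, ENNReal.ofReal (C * Real.exp (-|(((n - k : ℤ)) : ℝ)|)))
        = ∑' j : ℤ, ENNReal.ofReal (C * Real.exp (-|(j : ℝ)|)) := by
      exact (Equiv.subLeft n).tsum_eq (fun j : ℤ => ENNReal.ofReal (C * Real.exp (-|(j : ℝ)|)))
    exact step1.trans_eq step2
  apply lt_of_le_of_lt (iSup_le key)
  rw [← ENNReal.ofReal_tsum_of_nonneg
      (fun j => mul_nonneg hC0 (Real.exp_pos _).le) hsumR]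
  exact ENNReal.ofReal_lt_top
end
end

section
/- Let σ be a non-decreasing sigmoidal function whose kernel φ_σ(x) = (σ(x+1) − σ(x−1))/2 is positive, even, and nonincreasing on [0,∞). Then for every δ ∈ (0,1), the condition that max{φ_σ(nt−k): t ∈ [0,1]\(k/n−δ, k/n+δ)} / min{φ_σ(nt−k): t ∈ (k/n, k/n+δ²)} → 0 as n → ∞ (uniformly in k ∈ {0,…,n}) holds if and only if lim_{n→∞} φ_σ(nδ)/φ_σ(nδ²) = 0 for all δ ∈ (0,1). -/
open MeasureTheory Set Filter Topology

noncomputable section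

/-- For an even kernel antitone on `[0,∞)`, `φ x ≤ φ a` whenever `0 ≤ a ≤ |x|`. -/
lemma phi_le_of_abs (σ : ℝ → ℝ)
    (heven : ∀ x, phiK σ (-x) = phiK σ x)
    (hdec : AntitoneOn (phiK σ) (Ici (0:ℝ)))
    {a x : ℝ} (ha : 0 ≤ a) (h : a ≤ |x|) : phiK σ x ≤ phiK σ a := by
  have hx : phiK σ x = phiK σ |x| := by
    rcases abs_cases x with ⟨h1, _⟩ | ⟨h1, _⟩
    · rw [h1]
    · rw [h1, heven]
  rw [hx]
  exact hdec (mem_Ici.mpr ha) (mem_Ici.mpr (ha.trans h)) h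

/-- Lower bound for the `sInf` part. -/
lemma sInf_lb (σ : ℝ → ℝ)
    (hdec : AntitoneOn (phiK σ) (Ici (0:ℝ)))
    {n k : ℕ} {c : ℝ} (hn : 0 < (n:ℝ)) (hc : 0 < c) :
    phiK σ ((n:ℝ) * c) ≤
      sInf ((fun t => phiK σ ((n : ℝ) * t - (k : ℝ))) '' Ioo ((k:ℝ)/n) ((k:ℝ)/n + c)) := by
  apply le_csInf
  · exact (nonempty_Ioo.mpr (by linarith)).image _
  · rintro _ ⟨t, ⟨ht1, ht2⟩, rfl⟩
    have hkn : (n:ℝ) * ((k:ℝ)/n) = k := mul_div_cancel₀ _ (ne_of_gt hn)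
    have h1 : (0:ℝ) ≤ (n:ℝ) * t - k := by nlinarith
    have h2 : (n:ℝ) * t - k ≤ n * c := by nlinarith
    exact hdec (mem_Ici.mpr h1) (mem_Ici.mpr (by positivity)) h2

/-- Upper bound for the `sSup` part. -/
lemma sSup_ub (σ : ℝ → ℝ)
    (hpos : ∀ x, 0 < phiK σ x)
    (heven : ∀ x, phiK σ (-x) = phiK σ x)
    (hdec : AntitoneOn (phiK σ) (Ici (0:ℝ)))
    {n k : ℕ} {δ : ℝ} (hn : 0 < (n:ℝ)) (hδ : 0 < δ) :
    sSup ((fun t => phiK σ ((n : ℝ) * t - (k : ℝ))) ''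
        (Icc (0:ℝ) 1 \ Ioo ((k:ℝ)/n - δ) ((k:ℝ)/n + δ))) ≤ phiK σ ((n:ℝ) * δ) := by
  apply Real.sSup_le
  · rintro _ ⟨t, ⟨_, htno⟩, rfl⟩
    apply phi_le_of_abs σ heven hdec (by positivity)
    have hkn : (n:ℝ) * ((k:ℝ)/n) = k := mul_div_cancel₀ _ (ne_of_gt hn)
    rw [le_abs]
    simp only [mem_Ioo, not_and, not_lt] at htno
    rcases lt_or_ge ((k:ℝ)/n - δ) t with h | h
    · left; have := htno h; nlinarith
    · right; nlinarith
  · exact (hpos _).le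

set_option maxHeartbeats 2000000 in
/-- for a non-decreasing sigmoidal `σ` whose kernel `φ_σ` is positive, even,
and nonincreasing on `[0,∞)`, the uniform max/min kernel ratio condition (for every
`δ ∈ (0,1)`) holds if and only if `φ_σ(nδ)/φ_σ(nδ²) → 0` as `n → ∞` for all `δ ∈ (0,1)`. -/
theorem statement19 (σ : ℝ → ℝ) (hσ : Sigmoidal σ)
    (hpos : ∀ x, 0 < phiK σ x)
    (heven : ∀ x, phiK σ (-x) = phiK σ x)
    (hdec : AntitoneOn (phiK σ) (Ici (0:ℝ))) :
    RatioCond σ ↔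
      ∀ δ ∈ Ioo (0:ℝ) 1,
        Tendsto (fun n : ℕ =>
          phiK σ ((n : ℝ) * δ) / phiK σ ((n : ℝ) * δ ^ 2)) atTop (nhds 0) := by
  constructor
  · -- RatioCond → limit condition
    intro hR δ hδ
    obtain ⟨hδ0, hδ1⟩ := hδ
    set η : ℝ := Real.sqrt δ with hηdef
    have hη0 : 0 < η := Real.sqrt_pos.mpr hδ0
    have hη2 : η ^ 2 = δ := Real.sq_sqrt hδ0.le
    have hη1 : η < 1 := by nlinarith
    have hδη : δ < η := by nlinarith
    rw [Metric.tendsto_atTop]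
    intro ε hε
    obtain ⟨N₀, hN₀⟩ := hR η ⟨hη0, hη1⟩ ε hε
    -- eventually conditions on n
    have hev1 : ∀ᶠ n : ℕ in atTop, (N₀:ℝ) ≤ (n:ℝ) * δ :=
      (tendsto_natCast_atTop_atTop.atTop_mul_const hδ0).eventually_ge_atTop _
    have hev2 : ∀ᶠ n : ℕ in atTop, 1 + η ^ 2 ≤ (n:ℝ) * (δ * η - δ ^ 2) :=
      (tendsto_natCast_atTop_atTop.atTop_mul_const (by nlinarith)).eventually_ge_atTop _
    have hev3 : ∀ᶠ n : ℕ in atTop, 1 ≤ n := eventually_ge_atTop 1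
    obtain ⟨N, hN⟩ := eventually_atTop.mp ((hev1.and hev2).and hev3)
    refine ⟨N, fun n hn => ?_⟩
    obtain ⟨⟨hc1, hc2⟩, hc3⟩ := hN n hn
    have hn1 : (1:ℝ) ≤ (n:ℝ) := by exact_mod_cast hc3
    obtain ⟨m, hm1, hm2⟩ : ∃ m : ℕ, ((n:ℝ) * δ ^ 2 + 1) / η ^ 2 ≤ (m:ℝ) ∧
        (m:ℝ) < ((n:ℝ) * δ ^ 2 + 1) / η ^ 2 + 1 :=
      ⟨⌈((n:ℝ) * δ ^ 2 + 1) / η ^ 2⌉₊, Nat.le_ceil _, Nat.ceil_lt_add_one (by positivity)⟩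
    have hmη2 : (n:ℝ) * δ ^ 2 + 1 ≤ (m:ℝ) * η ^ 2 := by
      rw [div_le_iff₀ (by positivity : (0:ℝ) < η ^ 2)] at hm1; linarith
    have hmpos : 0 < (m:ℝ) := by
      have h0 : (0:ℝ) < (m:ℝ) * η ^ 2 := lt_of_lt_of_le (by positivity) hmη2
      nlinarith [h0, sq_nonneg η]
    -- m ≥ N₀
    have hN₀m : N₀ ≤ m := by
      have : (N₀:ℝ) ≤ (m:ℝ) := by nlinarith
      exact_mod_cast this
    -- m*η ≤ n*δ
    have hmul : (m:ℝ) * η ^ 2 < (n:ℝ) * δ ^ 2 + 1 + η ^ 2 := by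
      have := mul_lt_mul_of_pos_right hm2 (show (0:ℝ) < η ^ 2 by positivity)
      rw [add_mul, div_mul_cancel₀, one_mul] at this
      · exact this
      · positivity
    have hmη : (m:ℝ) * η ≤ (n:ℝ) * δ := by
      have h' : ((m:ℝ) * η) * η < ((n:ℝ) * δ) * η := by nlinarith
      exact ((mul_lt_mul_iff_of_pos_right hη0).mp h').le
    have hmη2' : (n:ℝ) * δ ^ 2 ≤ (m:ℝ) * η ^ 2 - 1 := by linarith
    have ht₀pos : 0 < η ^ 2 - 1 / (m:ℝ) := by
      have h1m : 1 / (m:ℝ) < η ^ 2 := by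
        rw [div_lt_iff₀ hmpos]; nlinarith
      linarith
    -- The two sets in `KernelRatio σ m 0 η`
    set S := ((fun t => phiK σ ((m : ℝ) * t - ((0:ℕ) : ℝ))) ''
      (Icc (0:ℝ) 1 \ Ioo (((0:ℕ):ℝ)/m - η) (((0:ℕ):ℝ)/m + η))) with hSdef
    set I := ((fun t => phiK σ ((m : ℝ) * t - ((0:ℕ) : ℝ))) ''
      (Ioo (((0:ℕ):ℝ)/m) (((0:ℕ):ℝ)/m + η ^ 2))) with hIdef
    have hzero : (((0:ℕ):ℝ)/(m:ℝ)) = 0 := by norm_num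
    have hbddA : BddAbove S := by
      refine ⟨phiK σ 0, ?_⟩
      rintro _ ⟨t, _, rfl⟩
      exact phi_le_of_abs σ heven hdec le_rfl (abs_nonneg _)
    have hbddB : BddBelow I := by
      refine ⟨0, ?_⟩
      rintro _ ⟨t, _, rfl⟩
      exact (hpos _).le
    have b1 : phiK σ ((m:ℝ) * η) ≤ sSup S := by
      apply le_csSup hbddA
      refine ⟨η, ⟨⟨hη0.le, hη1.le⟩, ?_⟩, by norm_num⟩
      rw [hzero]
      simp only [mem_Ioo, not_and, not_lt, zero_sub, zero_add]
      intro _; exact le_rfl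
    have b2 : sInf I ≤ phiK σ ((m:ℝ) * η ^ 2 - 1) := by
      apply csInf_le hbddB
      refine ⟨η ^ 2 - 1 / (m:ℝ), ⟨?_, ?_⟩, ?_⟩
      · rw [hzero]; exact ht₀pos
      · rw [hzero, zero_add]
        have : 0 < 1 / (m:ℝ) := by positivity
        linarith
      · simp only
        congr 1
        push_cast
        field_simp
        ring
    have b3 : phiK σ ((m:ℝ) * η ^ 2) ≤ sInf I :=
      sInf_lb σ hdec hmpos (by positivity)
    have a1 : phiK σ ((n:ℝ) * δ) ≤ phiK σ ((m:ℝ) * η) :=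
      hdec (mem_Ici.mpr (by positivity)) (mem_Ici.mpr (by positivity)) hmη
    have a2 : phiK σ ((m:ℝ) * η ^ 2 - 1) ≤ phiK σ ((n:ℝ) * δ ^ 2) :=
      hdec (mem_Ici.mpr (by positivity)) (mem_Ici.mpr (by nlinarith)) hmη2'
    have hIpos : 0 < sInf I := lt_of_lt_of_le (hpos _) b3
    have key : phiK σ ((n:ℝ) * δ) / phiK σ ((n:ℝ) * δ ^ 2) ≤ sSup S / sInf I :=
      div_le_div₀ ((hpos _).le.trans b1) (a1.trans b1) hIpos (b2.trans a2)
    have hlt : sSup S / sInf I < ε := hN₀ m hN₀m 0 (Nat.zero_le m)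
    rw [Real.dist_eq, sub_zero, abs_of_nonneg (div_nonneg (hpos _).le (hpos _).le)]
    exact lt_of_le_of_lt key hlt
  · -- limit condition → RatioCond
    intro h δ hδ ε hε
    obtain ⟨hδ0, hδ1⟩ := hδ
    obtain ⟨N, hN⟩ := eventually_atTop.mp ((h δ ⟨hδ0, hδ1⟩).eventually (gt_mem_nhds hε))
    refine ⟨max N 1, fun n hn k hk => ?_⟩
    have hn1 : 1 ≤ n := le_trans (le_max_right N 1) hn
    have hnR : 0 < (n:ℝ) := by exact_mod_cast hn1
    have hsup := sSup_ub σ hpos heven hdec (n := n) (k := k) hnR hδ0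
    have hinf := sInf_lb σ hdec (n := n) (k := k) hnR (show (0:ℝ) < δ ^ 2 by positivity)
    have key : KernelRatio σ n k δ ≤ phiK σ ((n:ℝ) * δ) / phiK σ ((n:ℝ) * δ ^ 2) := by
      unfold KernelRatio
      exact div_le_div₀ (hpos _).le hsup (hpos _) hinf
    exact lt_of_le_of_lt key (hN n (le_trans (le_max_left N 1) hn))
end
end
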